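/- arXiv:1707.02702 — 5 statements merged into one kernel-verified Lean document; each statement's English description precedes it below -/
import Mathlib

section
/- Sequential composition of Pufferfish with near-independence correction: Let $M_A$ and $M_B$ be mechanisms with discrete output spaces such that $M_A$ is $\epsilon_A$-Pufferfish private and $M_B$ is $\epsilon_B$-Pufferfish private in a framework $(\mathcal{S}, \mathcal{Q}, \Theta)$. Suppose there exists $E \ge 0$ such that for all secrets $s \in \mathcal{S}$ and all $\theta \in \Theta$, the max-divergence between the joint distribution $P(M_A(X), M_B(X) \mid s, \theta)$ and the product of marginals $P(M_A(X) \mid s, \theta) \cdot P(M_B(X) \mid s, \theta)$ is at most $E$ in both directions. Then releasing the pair $(M_A(X), M_B(X))$ satisfies $(\epsilon_A + \epsilon_B + 2E)$-Pufferfish privacy in $(\mathcal{S}, \mathcal{Q}, \Theta)$. -/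
/-- `ε`-Pufferfish privacy for a mechanism with likelihood function `L w s θ`
(probability that the output is `w` given secret `s` and data distribution `θ`),
framework `(S, Q, Θ)` with secret-positivity predicate `pos`. -/
def PufferfishPrivate {Secret Theta Output : Type*}
    (Q : Set (Secret × Secret)) (Θ : Set Theta)
    (pos : Secret → Theta → Prop)
    (L : Output → Secret → Theta → ℝ) (ε : ℝ) : Prop :=
  ∀ s ∈ Q, ∀ θ ∈ Θ, pos s.1 θ → pos s.2 θ → ∀ w : Output,
    Real.exp (-ε) ≤ L w s.1 θ / L w s.2 θ ∧ L w s.1 θ / L w s.2 θ ≤ Real.exp ε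

/-- **Sequential composition with near-independence correction**: if `M_A` is
`ε_A`-Pufferfish private, `M_B` is `ε_B`-Pufferfish private, and for every secret
and every `θ` the max-divergence between the joint output distribution and the
product of the marginals is at most `E` in both directions, then the joint release
is `(ε_A + ε_B + 2E)`-Pufferfish private. -/
theorem pufferfish_sequential_composition {Secret Theta OutA OutB : Type*}
    (S : Set Secret) (Q : Set (Secret × Secret)) (Θ : Set Theta)
    (pos : Secret → Theta → Prop)
    (LA : OutA → Secret → Theta → ℝ) (LB : OutB → Secret → Theta → ℝ)
    (LJ : OutA × OutB → Secret → Theta → ℝ)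
    (εA εB E : ℝ) (hεA : 0 ≤ εA) (hεB : 0 ≤ εB) (hE : 0 ≤ E)
    (hQS : ∀ s ∈ Q, s.1 ∈ S ∧ s.2 ∈ S)
    (hLApos : ∀ (w : OutA) (s : Secret) (θ : Theta), s ∈ S → θ ∈ Θ → pos s θ → 0 < LA w s θ)
    (hLBpos : ∀ (w : OutB) (s : Secret) (θ : Theta), s ∈ S → θ ∈ Θ → pos s θ → 0 < LB w s θ)
    (hLJpos : ∀ (w : OutA × OutB) (s : Secret) (θ : Theta), s ∈ S → θ ∈ Θ → pos s θ → 0 < LJ w s θ)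
    (hA : PufferfishPrivate Q Θ pos LA εA)
    (hB : PufferfishPrivate Q Θ pos LB εB)
    (hdiv1 : ∀ s ∈ S, ∀ θ ∈ Θ, pos s θ → ∀ (w1 : OutA) (w2 : OutB),
      LJ (w1, w2) s θ ≤ Real.exp E * (LA w1 s θ * LB w2 s θ))
    (hdiv2 : ∀ s ∈ S, ∀ θ ∈ Θ, pos s θ → ∀ (w1 : OutA) (w2 : OutB),
      LA w1 s θ * LB w2 s θ ≤ Real.exp E * LJ (w1, w2) s θ) :
    PufferfishPrivate Q Θ pos LJ (εA + εB + 2 * E) := by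
  intro s hs θ hθ h1 h2 w
  obtain ⟨hS1, hS2⟩ := hQS s hs
  obtain ⟨w1, w2⟩ := w
  have a1 := hLApos w1 s.1 θ hS1 hθ h1
  have a2 := hLApos w1 s.2 θ hS2 hθ h2
  have b1 := hLBpos w2 s.1 θ hS1 hθ h1
  have b2 := hLBpos w2 s.2 θ hS2 hθ h2
  have j1 := hLJpos (w1, w2) s.1 θ hS1 hθ h1
  have j2 := hLJpos (w1, w2) s.2 θ hS2 hθ h2
  obtain ⟨hAlo, hAhi⟩ := hA s hs θ hθ h1 h2 w1
  obtain ⟨hBlo, hBhi⟩ := hB s hs θ hθ h1 h2 w2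
  have hAhi' : LA w1 s.1 θ ≤ Real.exp εA * LA w1 s.2 θ := by
    rw [div_le_iff₀ a2] at hAhi; linarith
  have hBhi' : LB w2 s.1 θ ≤ Real.exp εB * LB w2 s.2 θ := by
    rw [div_le_iff₀ b2] at hBhi; linarith
  have hAlo' : Real.exp (-εA) * LA w1 s.2 θ ≤ LA w1 s.1 θ := by
    rw [le_div_iff₀ a2] at hAlo; linarith
  have hBlo' : Real.exp (-εB) * LB w2 s.2 θ ≤ LB w2 s.1 θ := by
    rw [le_div_iff₀ b2] at hBlo; linarith
  have hu1 := hdiv1 s.1 hS1 θ hθ h1 w1 w2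
  have hu2 := hdiv2 s.1 hS1 θ hθ h1 w1 w2
  have hv1 := hdiv1 s.2 hS2 θ hθ h2 w1 w2
  have hv2 := hdiv2 s.2 hS2 θ hθ h2 w1 w2
  have eE := Real.exp_pos E
  constructor
  · rw [le_div_iff₀ j2]
    have h3 : Real.exp (-εA) * LA w1 s.2 θ * (Real.exp (-εB) * LB w2 s.2 θ)
        ≤ LA w1 s.1 θ * LB w2 s.1 θ :=
      mul_le_mul hAlo' hBlo' (by positivity) (le_of_lt a1)
    have h5 : Real.exp (-εA) * LA w1 s.2 θ * (Real.exp (-εB) * LB w2 s.2 θ)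
        ≤ Real.exp E * LJ (w1, w2) s.1 θ := le_trans h3 hu2
    have key : Real.exp (-(εA + εB + 2 * E)) * (Real.exp E * (LA w1 s.2 θ * LB w2 s.2 θ))
        ≤ LJ (w1, w2) s.1 θ := by
      have heq : Real.exp (-(εA + εB + 2 * E)) * (Real.exp E * (LA w1 s.2 θ * LB w2 s.2 θ))
          = Real.exp (-E) * (Real.exp (-εA) * LA w1 s.2 θ * (Real.exp (-εB) * LB w2 s.2 θ)) := by
        rw [show (-(εA + εB + 2 * E)) = (-εA) + (-εB) + (-E) + (-E) by ring,
          Real.exp_add, Real.exp_add, Real.exp_add]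
        have hme : Real.exp (-E) * Real.exp E = 1 := by
          rw [← Real.exp_add]; simp
        linear_combination (Real.exp (-εA) * Real.exp (-εB) * Real.exp (-E) *
          (LA w1 s.2 θ * LB w2 s.2 θ)) * hme
      rw [heq]
      calc Real.exp (-E) * (Real.exp (-εA) * LA w1 s.2 θ * (Real.exp (-εB) * LB w2 s.2 θ))
          ≤ Real.exp (-E) * (Real.exp E * LJ (w1, w2) s.1 θ) :=
            mul_le_mul_of_nonneg_left h5 (le_of_lt (Real.exp_pos _))
        _ = LJ (w1, w2) s.1 θ := by rw [← mul_assoc, ← Real.exp_add]; simp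
    calc Real.exp (-(εA + εB + 2 * E)) * LJ (w1, w2) s.2 θ
        ≤ Real.exp (-(εA + εB + 2 * E)) * (Real.exp E * (LA w1 s.2 θ * LB w2 s.2 θ)) :=
          mul_le_mul_of_nonneg_left hv1 (le_of_lt (Real.exp_pos _))
      _ ≤ LJ (w1, w2) s.1 θ := key
  · rw [div_le_iff₀ j2]
    have h3 : LA w1 s.1 θ * LB w2 s.1 θ
        ≤ Real.exp εA * LA w1 s.2 θ * (Real.exp εB * LB w2 s.2 θ) :=
      mul_le_mul hAhi' hBhi' (le_of_lt b1) (by positivity)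
    calc LJ (w1, w2) s.1 θ
        ≤ Real.exp E * (LA w1 s.1 θ * LB w2 s.1 θ) := hu1
      _ ≤ Real.exp E * (Real.exp εA * LA w1 s.2 θ * (Real.exp εB * LB w2 s.2 θ)) :=
          mul_le_mul_of_nonneg_left h3 (le_of_lt eE)
      _ = Real.exp E * (Real.exp εA * Real.exp εB) * (LA w1 s.2 θ * LB w2 s.2 θ) := by ring
      _ ≤ Real.exp E * (Real.exp εA * Real.exp εB) * (Real.exp E * LJ (w1, w2) s.2 θ) :=
          mul_le_mul_of_nonneg_left hv2 (by positivity)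
      _ = Real.exp (εA + εB + 2 * E) * LJ (w1, w2) s.2 θ := by
          rw [show εA + εB + 2 * E = E + (εA + εB) + E by ring,
            Real.exp_add, Real.exp_add, Real.exp_add]
          ring
end

section
/- If two mechanisms $M_A, M_B$ produce outputs that are conditionally independent given the secret and the data distribution, and $M_A$ is $\epsilon_A$-Pufferfish private and $M_B$ is $\epsilon_B$-Pufferfish private in framework $(\mathcal{S}, \mathcal{Q}, \Theta)$, then releasing $(M_A(X), M_B(X))$ is $(\epsilon_A + \epsilon_B)$-Pufferfish private in $(\mathcal{S}, \mathcal{Q}, \Theta)$. -/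
/-- **Sequential composition under conditional independence**: if the outputs of
`M_A` and `M_B` are conditionally independent given the secret and the data
distribution, and `M_A` is `ε_A`- and `M_B` is `ε_B`-Pufferfish private, then
releasing both is `(ε_A + ε_B)`-Pufferfish private. -/
theorem pufferfish_composition_indep {Secret Theta OutA OutB : Type*}
    (S : Set Secret) (Q : Set (Secret × Secret)) (Θ : Set Theta)
    (pos : Secret → Theta → Prop)
    (LA : OutA → Secret → Theta → ℝ) (LB : OutB → Secret → Theta → ℝ)
    (LJ : OutA × OutB → Secret → Theta → ℝ)
    (εA εB : ℝ) (hεA : 0 ≤ εA) (hεB : 0 ≤ εB)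
    (hQS : ∀ s ∈ Q, s.1 ∈ S ∧ s.2 ∈ S)
    (hLApos : ∀ (w : OutA) (s : Secret) (θ : Theta), s ∈ S → θ ∈ Θ → pos s θ → 0 < LA w s θ)
    (hLBpos : ∀ (w : OutB) (s : Secret) (θ : Theta), s ∈ S → θ ∈ Θ → pos s θ → 0 < LB w s θ)
    (hA : PufferfishPrivate Q Θ pos LA εA)
    (hB : PufferfishPrivate Q Θ pos LB εB)
    (hindep : ∀ s ∈ S, ∀ θ ∈ Θ, pos s θ → ∀ (w1 : OutA) (w2 : OutB),
      LJ (w1, w2) s θ = LA w1 s θ * LB w2 s θ) :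
    PufferfishPrivate Q Θ pos LJ (εA + εB) := by
  rintro s hs θ hθ h1 h2 ⟨w1, w2⟩
  obtain ⟨hs1, hs2⟩ := hQS s hs
  rw [hindep s.1 hs1 θ hθ h1, hindep s.2 hs2 θ hθ h2]
  have hA1 := hLApos w1 s.1 θ hs1 hθ h1
  have hA2 := hLApos w1 s.2 θ hs2 hθ h2
  have hB1 := hLBpos w2 s.1 θ hs1 hθ h1
  have hB2 := hLBpos w2 s.2 θ hs2 hθ h2
  have hEq : LA w1 s.1 θ * LB w2 s.1 θ / (LA w1 s.2 θ * LB w2 s.2 θ)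
      = (LA w1 s.1 θ / LA w1 s.2 θ) * (LB w2 s.1 θ / LB w2 s.2 θ) := by
    field_simp
  obtain ⟨ha1, ha2⟩ := hA s hs θ hθ h1 h2 w1
  obtain ⟨hb1, hb2⟩ := hB s hs θ hθ h1 h2 w2
  rw [hEq, neg_add, Real.exp_add, Real.exp_add]
  constructor
  · exact mul_le_mul ha1 hb1 (Real.exp_pos _).le (by positivity)
  · exact mul_le_mul ha2 hb2 (by positivity) (Real.exp_pos _).le
end

section
/- Parallel composition for Pufferfish on Markov chains (general mechanisms): Let $X = (X_1, \ldots, X_T)$ be a Markov chain with finite state space $[k]$ and distribution $\theta \in \Theta$. Let $X^A = (X_{T_1}, \ldots, X_{T_2})$ and $X^B = (X_{T_3}, \ldots, X_{T_4})$ with $T_1 < T_2 < T_3 < T_4$. Suppose $M_A(X^A)$ is $\epsilon_A$-Pufferfish private for the secrets about the values of nodes in $[T_1, T_2]$, and $M_B(X^B)$ is $\epsilon_B$-Pufferfish private for the secrets about nodes in $[T_3, T_4]$. Then for any secret pair about a node $X_i$ with $T_1 \le i \le T_2$, any outputs $w_A, w_B$, and any $\theta \in \Theta$: $\frac{P(M_A(X^A)=w_A,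 M_B(X^B)=w_B \mid X_i = a, \theta)}{P(M_A(X^A)=w_A, M_B(X^B)=w_B \mid X_i = b, \theta)} \le \min\{e^{\epsilon_A + \epsilon_B}, e^{\epsilon_A + e_\Theta(X_{T_3} \mid X_{T_2})}\}$, where $e_\Theta(X_{T_3} \mid X_{T_2})$ is the max-influence of $X_{T_2}$ on $X_{T_3}$ over $\Theta$. The symmetric bound with $\epsilon_B + e_\Theta(X_{T_2} \mid X_{T_3})$ holds for secrets about nodes in $[T_3, T_4]$. -/
open Finset

/-- Joint probability of a full trajectory of a Markov chain with initial
distribution `q` and transition kernel `P`: nodes are `X_0, …, X_T`. -/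
noncomputable def jp {k T : ℕ} (q : Fin k → ℝ) (P : Fin k → Fin k → ℝ)
    (x : Fin (T + 1) → Fin k) : ℝ :=
  q (x 0) * ∏ t : Fin T, P (x t.castSucc) (x t.succ)

/-- Marginal probability `P(X_i = a)`. -/
noncomputable def margNode {k T : ℕ} (q : Fin k → ℝ) (P : Fin k → Fin k → ℝ)
    (i : Fin (T + 1)) (a : Fin k) : ℝ :=
  ∑ x ∈ univ.filter (fun x : Fin (T + 1) → Fin k => x i = a), jp q P x

/-- Conditional probability (density) of a mechanism output with likelihood `L`
given `X_i = a`: `P(M(X) = w | X_i = a)` where `L x = P(M(X) = w | X = x)`. -/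
noncomputable def condOut {k T : ℕ} (q : Fin k → ℝ) (P : Fin k → Fin k → ℝ)
    (L : (Fin (T + 1) → Fin k) → ℝ) (i : Fin (T + 1)) (a : Fin k) : ℝ :=
  (∑ x ∈ univ.filter (fun x : Fin (T + 1) → Fin k => x i = a), jp q P x * L x)
    / margNode q P i a

/-- Conditional probability `P(X_j = c | X_i = a)`. -/
noncomputable def condTrans {k T : ℕ} (q : Fin k → ℝ) (P : Fin k → Fin k → ℝ)
    (j i : Fin (T + 1)) (c a : Fin k) : ℝ :=
  (∑ x ∈ univ.filter (fun x : Fin (T + 1) → Fin k => x i = a ∧ x j = c), jp q P x)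
    / margNode q P i a

section Aux

variable {k T : ℕ} {q : Fin k → ℝ} {P : Fin k → Fin k → ℝ}

lemma jp_nonneg (hq : ∀ s, 0 ≤ q s) (hP : ∀ s s', 0 ≤ P s s')
    (x : Fin (T + 1) → Fin k) : 0 ≤ jp q P x :=
  mul_nonneg (hq _) (Finset.prod_nonneg fun _ _ => hP _ _)

lemma margNode_nonneg (hq : ∀ s, 0 ≤ q s) (hP : ∀ s s', 0 ≤ P s s')
    (i : Fin (T + 1)) (a : Fin k) : 0 ≤ margNode q P i a :=
  Finset.sum_nonneg fun x _ => jp_nonneg hq hP x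

lemma condOut_nonneg (hq : ∀ s, 0 ≤ q s) (hP : ∀ s s', 0 ≤ P s s')
    {L : (Fin (T + 1) → Fin k) → ℝ} (hL : ∀ x, 0 ≤ L x)
    (i : Fin (T + 1)) (a : Fin k) : 0 ≤ condOut q P L i a :=
  div_nonneg (Finset.sum_nonneg fun x _ => mul_nonneg (jp_nonneg hq hP x) (hL x))
    (margNode_nonneg hq hP i a)

lemma condTrans_nonneg (hq : ∀ s, 0 ≤ q s) (hP : ∀ s s', 0 ≤ P s s')
    (j i : Fin (T + 1)) (c a : Fin k) : 0 ≤ condTrans q P j i c a :=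
  div_nonneg (Finset.sum_nonneg fun x _ => jp_nonneg hq hP x)
    (margNode_nonneg hq hP i a)

lemma jp_eq_zero (hq : ∀ s, 0 ≤ q s) (hP : ∀ s s', 0 ≤ P s s')
    {n : Fin (T + 1)} {c : Fin k} (h : margNode q P n c = 0)
    {x : Fin (T + 1) → Fin k} (hx : x n = c) : jp q P x = 0 :=
  (Finset.sum_eq_zero_iff_of_nonneg (fun y _ => jp_nonneg hq hP y)).1 h x (by simp [hx])

lemma condOut_congr {L1 L2 : (Fin (T + 1) → Fin k) → ℝ} (h : ∀ x, L1 x = L2 x)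
    (i : Fin (T + 1)) (a : Fin k) : condOut q P L1 i a = condOut q P L2 i a := by
  unfold condOut
  congr 1
  exact Finset.sum_congr rfl fun x _ => by rw [h]

/-- Glue two trajectories at node `m`. -/
def glue (m : Fin (T + 1)) (y z : Fin (T + 1) → Fin k) : Fin (T + 1) → Fin k :=
  fun t => if t ≤ m then y t else z t

lemma glue_glue (m : Fin (T + 1)) (y z : Fin (T + 1) → Fin k) :
    glue m (glue m y z) (glue m z y) = y := by
  funext t; by_cases h : t ≤ m <;> simp [glue, h]

lemma glue_jp (q : Fin k → ℝ) (P : Fin k → Fin k → ℝ) (m : Fin (T + 1))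
    (y z : Fin (T + 1) → Fin k) (h : y m = z m) :
    jp q P (glue m y z) * jp q P (glue m z y) = jp q P y * jp q P z := by
  unfold jp
  rw [mul_mul_mul_comm, mul_mul_mul_comm (q (y 0)), ← Finset.prod_mul_distrib,
    ← Finset.prod_mul_distrib]
  refine congrArg₂ (· * ·) ?_ ?_
  · have h0 : (0 : Fin (T + 1)) ≤ m := Fin.zero_le m
    simp [glue, h0]
  · refine Finset.prod_congr rfl fun t _ => ?_
    by_cases h1 : (t.succ : Fin (T + 1)) ≤ m
    · have h2 : (t.castSucc : Fin (T + 1)) ≤ m := le_trans t.castSucc_le_succ h1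
      simp [glue, h1, h2]
    · by_cases h2 : (t.castSucc : Fin (T + 1)) ≤ m
      · have hm : t.castSucc = m := by
          rcases lt_or_eq_of_le h2 with h3 | h3
          · exact absurd (Fin.castSucc_lt_iff_succ_le.1 h3) h1
          · exact h3
        simp only [glue, h1, h2, if_true, if_false]
        rw [hm, h]
        ring
      · simp only [glue, h1, h2, if_false]
        ring

/-- Conditional independence of the past and the future given the value at `m`. -/
lemma condIndep (q : Fin k → ℝ) (P : Fin k → Fin k → ℝ) (m : Fin (T + 1))
    (Φ Ψ : (Fin (T + 1) → Fin k) → ℝ)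
    (hΦ : ∀ x y, (∀ t, t ≤ m → x t = y t) → Φ x = Φ y)
    (hΨ : ∀ x y, (∀ t, m ≤ t → x t = y t) → Ψ x = Ψ y)
    (c : Fin k) :
    (∑ x ∈ univ.filter (fun x : Fin (T + 1) → Fin k => x m = c), jp q P x * (Φ x * Ψ x)) *
      (∑ x ∈ univ.filter (fun x : Fin (T + 1) → Fin k => x m = c), jp q P x) =
    (∑ x ∈ univ.filter (fun x : Fin (T + 1) → Fin k => x m = c), jp q P x * Φ x) *
      (∑ x ∈ univ.filter (fun x : Fin (T + 1) → Fin k => x m = c), jp q P x * Ψ x) := by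
  rw [Finset.sum_mul_sum, Finset.sum_mul_sum]
  rw [← Finset.sum_product', ← Finset.sum_product']
  refine Finset.sum_nbij' (fun p => (glue m p.1 p.2, glue m p.2 p.1))
    (fun p => (glue m p.1 p.2, glue m p.2 p.1)) ?_ ?_ ?_ ?_ ?_
  · rintro ⟨y, z⟩ hp
    simp only [Finset.mem_product, Finset.mem_filter, Finset.mem_univ, true_and] at hp ⊢
    exact ⟨by simp [glue, hp.1], by simp [glue, hp.2]⟩
  · rintro ⟨y, z⟩ hp
    simp only [Finset.mem_product, Finset.mem_filter, Finset.mem_univ, true_and] at hp ⊢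
    exact ⟨by simp [glue, hp.1], by simp [glue, hp.2]⟩
  · rintro ⟨y, z⟩ _
    simp only [Prod.mk.injEq]
    exact ⟨glue_glue m y z, glue_glue m z y⟩
  · rintro ⟨y, z⟩ _
    simp only [Prod.mk.injEq]
    exact ⟨glue_glue m y z, glue_glue m z y⟩
  · rintro ⟨y, z⟩ hp
    simp only [Finset.mem_product, Finset.mem_filter, Finset.mem_univ, true_and] at hp
    have hyz : y m = z m := by rw [hp.1, hp.2]
    have hΦ1 : Φ (glue m y z) = Φ y := hΦ _ _ (fun t ht => by simp [glue, ht])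
    have hΨ1 : Ψ (glue m z y) = Ψ y := by
      refine hΨ _ _ fun t ht => ?_
      by_cases h : t ≤ m
      · have : t = m := le_antisymm h ht
        simp [glue, h, this, hyz]
      · simp [glue, h]
    have hjp : jp q P (glue m y z) * jp q P (glue m z y) = jp q P y * jp q P z :=
      glue_jp q P m y z hyz
    simp only [hΦ1, hΨ1]
    linear_combination (-(Φ y * Ψ y)) * hjp

lemma sum_filter_ind (p r : (Fin (T + 1) → Fin k) → Prop)
    [DecidablePred p] [DecidablePred r] (F : (Fin (T + 1) → Fin k) → ℝ) :
    ∑ x ∈ univ.filter p, (if r x then F x else 0)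
      = ∑ x ∈ univ.filter (fun x => r x ∧ p x), F x := by
  rw [Finset.sum_filter, Finset.sum_filter]
  refine Finset.sum_congr rfl fun x _ => ?_
  by_cases hp : p x <;> by_cases hr : r x <;> simp [hp, hr]

lemma sum_fiber_split (i m : Fin (T + 1)) (e : Fin k) (F : (Fin (T + 1) → Fin k) → ℝ) :
    (∑ x ∈ univ.filter (fun x : Fin (T + 1) → Fin k => x i = e), F x)
      = ∑ c : Fin k, ∑ x ∈ univ.filter (fun x : Fin (T + 1) → Fin k => x i = e ∧ x m = c), F x := by
  rw [← Finset.sum_fiberwise (univ.filter (fun x : Fin (T + 1) → Fin k => x i = e))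
    (fun x => x m) F]
  exact Finset.sum_congr rfl fun c _ => by rw [Finset.filter_filter]

end Aux
section Main

variable {k T : ℕ} {q : Fin k → ℝ} {P : Fin k → Fin k → ℝ}

lemma margNode_fiber (n n' : Fin (T + 1)) (c : Fin k) :
    margNode q P n c
      = ∑ d : Fin k, ∑ x ∈ univ.filter (fun x : Fin (T + 1) → Fin k => x n = c ∧ x n' = d),
          jp q P x :=
  sum_fiber_split n n' c (jp q P)

lemma condTrans_sum_eq_one (n n' : Fin (T + 1)) (c : Fin k)
    (hc : margNode q P n c ≠ 0) :
    ∑ d : Fin k, condTrans q P n' n d c = 1 := by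
  unfold condTrans
  rw [← Finset.sum_div, ← margNode_fiber n n' c, div_self hc]

lemma condTrans_eq_zero (hq : ∀ s, 0 ≤ q s) (hP : ∀ s s', 0 ≤ P s s')
    (n n' : Fin (T + 1)) {d : Fin k} (c : Fin k) (hd : margNode q P n' d = 0) :
    condTrans q P n' n d c = 0 := by
  unfold condTrans
  rw [Finset.sum_eq_zero fun x hx => jp_eq_zero hq hP hd (Finset.mem_filter.1 hx).2.2,
    zero_div]

lemma decomp (n n' : Fin (T + 1)) (L : (Fin (T + 1) → Fin k) → ℝ)
    (hmix : ∀ c d, ∑ x ∈ univ.filter (fun x : Fin (T + 1) → Fin k => x n = c ∧ x n' = d),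
        jp q P x * L x
      = (∑ x ∈ univ.filter (fun x : Fin (T + 1) → Fin k => x n = c ∧ x n' = d), jp q P x)
          * condOut q P L n' d)
    (c : Fin k) :
    condOut q P L n c = ∑ d : Fin k, condTrans q P n' n d c * condOut q P L n' d := by
  unfold condOut condTrans
  rw [sum_fiber_split n n' c (fun x => jp q P x * L x), Finset.sum_div]
  refine Finset.sum_congr rfl fun d _ => ?_
  rw [hmix c d, mul_div_right_comm]
  rfl

lemma boundary (hq : ∀ s, 0 ≤ q s) (hP : ∀ s s', 0 ≤ P s s')
    (n n' : Fin (T + 1)) (L : (Fin (T + 1) → Fin k) → ℝ) (hL0 : ∀ x, 0 ≤ L x)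
    (hmix : ∀ c d, ∑ x ∈ univ.filter (fun x : Fin (T + 1) → Fin k => x n = c ∧ x n' = d),
        jp q P x * L x
      = (∑ x ∈ univ.filter (fun x : Fin (T + 1) → Fin k => x n = c ∧ x n' = d), jp q P x)
          * condOut q P L n' d)
    (ε e' : ℝ)
    (hpriv : ∀ d d', 0 < margNode q P n' d → 0 < margNode q P n' d' →
      condOut q P L n' d ≤ Real.exp ε * condOut q P L n' d')
    (hinf : ∀ c c' d, 0 < margNode q P n c → 0 < margNode q P n c' →
      condTrans q P n' n d c ≤ Real.exp e' * condTrans q P n' n d c')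
    (c c' : Fin k) (hc : 0 < margNode q P n c) (hc' : 0 < margNode q P n c') :
    condOut q P L n c ≤ min (Real.exp ε) (Real.exp e') * condOut q P L n c' := by
  have hW0 : ∀ d, 0 ≤ condOut q P L n' d := fun d => condOut_nonneg hq hP hL0 n' d
  have hct0 : ∀ d e, 0 ≤ condTrans q P n' n d e := fun d e => condTrans_nonneg hq hP n' n d e
  -- a node value of positive marginal at n' exists
  have h0 : (∑ x ∈ univ.filter (fun x : Fin (T + 1) → Fin k => x n = c), (0:ℝ))
      < ∑ x ∈ univ.filter (fun x : Fin (T + 1) → Fin k => x n = c), jp q P x := by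
    simpa [margNode] using hc
  obtain ⟨x₀, hx₀mem, hx₀⟩ := Finset.exists_lt_of_sum_lt h0
  have hd0 : 0 < margNode q P n' (x₀ n') :=
    lt_of_lt_of_le hx₀ (Finset.single_le_sum (fun y _ => jp_nonneg hq hP y) (by simp))
  have hne : (univ.filter (fun d : Fin k => 0 < margNode q P n' d)).Nonempty :=
    ⟨x₀ n', by simp [hd0]⟩
  obtain ⟨d₀, hd₀mem, hd₀min⟩ := Finset.exists_min_image _ (fun d => condOut q P L n' d) hne
  have hd₀pos : 0 < margNode q P n' d₀ := (Finset.mem_filter.1 hd₀mem).2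
  rw [decomp n n' L hmix c, decomp n n' L hmix c']
  have hS0 : 0 ≤ ∑ d : Fin k, condTrans q P n' n d c' * condOut q P L n' d :=
    Finset.sum_nonneg fun d _ => mul_nonneg (hct0 d c') (hW0 d)
  rw [min_mul_of_nonneg _ _ hS0]
  refine le_min ?_ ?_
  · -- ε route
    calc ∑ d : Fin k, condTrans q P n' n d c * condOut q P L n' d
        ≤ ∑ d : Fin k, condTrans q P n' n d c * (Real.exp ε * condOut q P L n' d₀) := by
          refine Finset.sum_le_sum fun d _ => ?_
          by_cases hd : 0 < margNode q P n' d
          · exact mul_le_mul_of_nonneg_left (hpriv d d₀ hd hd₀pos) (hct0 d c)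
          · have : margNode q P n' d = 0 :=
              le_antisymm (not_lt.1 hd) (margNode_nonneg hq hP n' d)
            rw [condTrans_eq_zero hq hP n n' c this]
            simp
      _ = Real.exp ε * condOut q P L n' d₀ := by
          rw [← Finset.sum_mul, condTrans_sum_eq_one n n' c hc.ne', one_mul]
      _ ≤ Real.exp ε * ∑ d : Fin k, condTrans q P n' n d c' * condOut q P L n' d := by
          refine mul_le_mul_of_nonneg_left ?_ (Real.exp_pos ε).le
          calc condOut q P L n' d₀
              = ∑ d : Fin k, condTrans q P n' n d c' * condOut q P L n' d₀ := by
                rw [← Finset.sum_mul, condTrans_sum_eq_one n n' c' hc'.ne', one_mul]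
            _ ≤ ∑ d : Fin k, condTrans q P n' n d c' * condOut q P L n' d := by
                refine Finset.sum_le_sum fun d _ => ?_
                by_cases hd : 0 < margNode q P n' d
                · exact mul_le_mul_of_nonneg_left (hd₀min d (by simp [hd])) (hct0 d c')
                · have : margNode q P n' d = 0 :=
                    le_antisymm (not_lt.1 hd) (margNode_nonneg hq hP n' d)
                  rw [condTrans_eq_zero hq hP n n' c' this]
                  simp
  · -- e' route
    calc ∑ d : Fin k, condTrans q P n' n d c * condOut q P L n' d
        ≤ ∑ d : Fin k, Real.exp e' * condTrans q P n' n d c' * condOut q P L n' d :=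
          Finset.sum_le_sum fun d _ =>
            mul_le_mul_of_nonneg_right (hinf c c' d hc hc') (hW0 d)
      _ = Real.exp e' * ∑ d : Fin k, condTrans q P n' n d c' * condOut q P L n' d := by
          rw [Finset.mul_sum]
          exact Finset.sum_congr rfl fun d _ => by ring

end Main
section Core

variable {k T : ℕ} {q : Fin k → ℝ} {P : Fin k → Fin k → ℝ}

lemma core (hq : ∀ s, 0 ≤ q s) (hP : ∀ s s', 0 ≤ P s s')
    (i m : Fin (T + 1)) (φ ψ : (Fin (T + 1) → Fin k) → ℝ)
    (hφ0 : ∀ x, 0 ≤ φ x) (hψ0 : ∀ x, 0 ≤ ψ x)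
    (hsplit : ∀ e c, ∑ x ∈ univ.filter (fun x : Fin (T + 1) → Fin k => x i = e ∧ x m = c),
        jp q P x * (φ x * ψ x)
      = (∑ x ∈ univ.filter (fun x : Fin (T + 1) → Fin k => x i = e ∧ x m = c),
          jp q P x * φ x) * condOut q P ψ m c)
    (a b : Fin k) (ha : 0 < margNode q P i a) (hb : 0 < margNode q P i b)
    (ε K : ℝ) (hK : 0 ≤ K)
    (hpriv : condOut q P φ i a ≤ Real.exp ε * condOut q P φ i b)
    (hV : ∀ c c', 0 < margNode q P m c → 0 < margNode q P m c' →
      condOut q P ψ m c ≤ K * condOut q P ψ m c') :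
    condOut q P (fun x => φ x * ψ x) i a
      ≤ Real.exp ε * K * condOut q P (fun x => φ x * ψ x) i b := by
  set A : Fin k → Fin k → ℝ := fun e c =>
    ∑ x ∈ univ.filter (fun x : Fin (T + 1) → Fin k => x i = e ∧ x m = c),
      jp q P x * φ x with hA
  set V : Fin k → ℝ := fun c => condOut q P ψ m c with hVdef
  set N : Fin k → ℝ := fun e =>
    ∑ x ∈ univ.filter (fun x : Fin (T + 1) → Fin k => x i = e),
      jp q P x * (φ x * ψ x) with hNdef
  set NA : Fin k → ℝ := fun e =>
    ∑ x ∈ univ.filter (fun x : Fin (T + 1) → Fin k => x i = e),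
      jp q P x * φ x with hNAdef
  have hA0 : ∀ e c, 0 ≤ A e c :=
    fun e c => Finset.sum_nonneg fun x _ => mul_nonneg (jp_nonneg hq hP x) (hφ0 x)
  have hV0 : ∀ c, 0 ≤ V c := fun c => condOut_nonneg hq hP hψ0 m c
  have hAz : ∀ e c, margNode q P m c = 0 → A e c = 0 := fun e c h =>
    Finset.sum_eq_zero fun x hx => by
      rw [jp_eq_zero hq hP h (Finset.mem_filter.1 hx).2.2, zero_mul]
  have hNsum : ∀ e, N e = ∑ c : Fin k, A e c * V c := by
    intro e
    rw [hNdef]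
    simp only
    rw [sum_fiber_split i m e (fun x => jp q P x * (φ x * ψ x))]
    exact Finset.sum_congr rfl fun c _ => hsplit e c
  have hNAsum : ∀ e, NA e = ∑ c : Fin k, A e c :=
    fun e => sum_fiber_split i m e (fun x => jp q P x * φ x)
  -- there is a value of positive marginal at m
  have h0 : (∑ x ∈ univ.filter (fun x : Fin (T + 1) → Fin k => x i = a), (0:ℝ))
      < ∑ x ∈ univ.filter (fun x : Fin (T + 1) → Fin k => x i = a), jp q P x := by
    simpa [margNode] using ha
  obtain ⟨x₀, hx₀mem, hx₀⟩ := Finset.exists_lt_of_sum_lt h0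
  have hc0 : 0 < margNode q P m (x₀ m) :=
    lt_of_lt_of_le hx₀ (Finset.single_le_sum (fun y _ => jp_nonneg hq hP y) (by simp))
  have hne : (univ.filter (fun c : Fin k => 0 < margNode q P m c)).Nonempty :=
    ⟨x₀ m, by simp [hc0]⟩
  obtain ⟨c₀, hc₀mem, hc₀max⟩ := Finset.exists_max_image _ (fun c => V c) hne
  have hc₀pos : 0 < margNode q P m c₀ := (Finset.mem_filter.1 hc₀mem).2
  have hNa : N a ≤ NA a * V c₀ := by
    rw [hNsum a, hNAsum a, Finset.sum_mul]
    refine Finset.sum_le_sum fun c _ => ?_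
    by_cases hm : 0 < margNode q P m c
    · exact mul_le_mul_of_nonneg_left (hc₀max c (by simp [hm])) (hA0 a c)
    · rw [hAz a c (le_antisymm (not_lt.1 hm) (margNode_nonneg hq hP m c))]
      simp
  have hNb : NA b * V c₀ ≤ K * N b := by
    rw [hNsum b, hNAsum b, Finset.sum_mul, Finset.mul_sum]
    refine Finset.sum_le_sum fun c _ => ?_
    by_cases hm : 0 < margNode q P m c
    · calc A b c * V c₀ ≤ A b c * (K * V c) :=
            mul_le_mul_of_nonneg_left (hV c₀ c hc₀pos hm) (hA0 b c)
        _ = K * (A b c * V c) := by ring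
    · rw [hAz b c (le_antisymm (not_lt.1 hm) (margNode_nonneg hq hP m c))]
      simp
  have hcoa : condOut q P (fun x => φ x * ψ x) i a = N a / margNode q P i a := rfl
  have hcob : condOut q P (fun x => φ x * ψ x) i b = N b / margNode q P i b := rfl
  have hcpa : condOut q P φ i a = NA a / margNode q P i a := rfl
  have hcpb : condOut q P φ i b = NA b / margNode q P i b := rfl
  rw [hcoa, hcob]
  rw [hcpa, hcpb] at hpriv
  calc N a / margNode q P i a
      ≤ (NA a * V c₀) / margNode q P i a := by
        exact div_le_div_of_nonneg_right hNa ha.le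
    _ = (NA a / margNode q P i a) * V c₀ := by rw [mul_div_right_comm]
    _ ≤ (Real.exp ε * (NA b / margNode q P i b)) * V c₀ :=
        mul_le_mul_of_nonneg_right hpriv (hV0 c₀)
    _ = Real.exp ε * ((NA b * V c₀) / margNode q P i b) := by ring
    _ ≤ Real.exp ε * ((K * N b) / margNode q P i b) := by
        refine mul_le_mul_of_nonneg_left ?_ (Real.exp_pos ε).le
        exact div_le_div_of_nonneg_right hNb hb.le
    _ = Real.exp ε * K * (N b / margNode q P i b) := by ring

end Core
/-- **Parallel composition for Pufferfish on Markov chains (general mechanisms)**: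
if `M_A` acting on the subchain `X_{T1..T2}` is `ε_A`-Pufferfish private for secrets
about nodes in `[T1,T2]`, `M_B` acting on `X_{T3..T4}` is `ε_B`-Pufferfish private for
secrets about nodes in `[T3,T4]`, and the max-influences between the boundary nodes
`X_{T2}, X_{T3}` are bounded by `eInf32` (of `X_{T2}` on `X_{T3}`) resp. `eInf23`
(of `X_{T3}` on `X_{T2}`) over all `θ ∈ Θ`, then the joint likelihood ratio for a
secret pair at a node `i ∈ [T1,T2]` is at most `min {exp (ε_A+ε_B), exp (ε_A+eInf32)}`,
and symmetrically at most `min {exp (ε_A+ε_B), exp (ε_B+eInf23)}` for `i ∈ [T3,T4]`. -/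
theorem pufferfish_parallel_composition_general {k T : ℕ} {OutA OutB : Type*}
    (Θ : Set ((Fin k → ℝ) × (Fin k → Fin k → ℝ)))
    (hΘ : ∀ θ ∈ Θ, (∀ s, 0 ≤ θ.1 s) ∧ (∑ s, θ.1 s = 1) ∧
      (∀ s s', 0 ≤ θ.2 s s') ∧ (∀ s, ∑ s', θ.2 s s' = 1))
    (T1 T2 T3 T4 : Fin (T + 1)) (h12 : T1 < T2) (h23 : T2 < T3) (h34 : T3 < T4)
    (LA : OutA → (Fin (T + 1) → Fin k) → ℝ) (LB : OutB → (Fin (T + 1) → Fin k) → ℝ)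
    (hLA0 : ∀ w x, 0 ≤ LA w x) (hLB0 : ∀ w x, 0 ≤ LB w x)
    -- `M_A` depends only on the subchain `X^A = (X_{T1}, …, X_{T2})`:
    (hLAdep : ∀ (w : OutA) (x y : Fin (T + 1) → Fin k),
      (∀ t, T1 ≤ t → t ≤ T2 → x t = y t) → LA w x = LA w y)
    -- `M_B` depends only on the subchain `X^B = (X_{T3}, …, X_{T4})`:
    (hLBdep : ∀ (w : OutB) (x y : Fin (T + 1) → Fin k),
      (∀ t, T3 ≤ t → t ≤ T4 → x t = y t) → LB w x = LB w y)
    (εA εB eInf32 eInf23 : ℝ)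
    -- `M_A(X^A)` is `ε_A`-Pufferfish private for secrets about nodes in `[T1, T2]`:
    (hA : ∀ θ ∈ Θ, ∀ i, T1 ≤ i → i ≤ T2 → ∀ (a b : Fin k) (w : OutA),
      0 < margNode θ.1 θ.2 i a → 0 < margNode θ.1 θ.2 i b →
      condOut θ.1 θ.2 (LA w) i a ≤ Real.exp εA * condOut θ.1 θ.2 (LA w) i b)
    -- `M_B(X^B)` is `ε_B`-Pufferfish private for secrets about nodes in `[T3, T4]`:
    (hB : ∀ θ ∈ Θ, ∀ i, T3 ≤ i → i ≤ T4 → ∀ (a b : Fin k) (w : OutB),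
      0 < margNode θ.1 θ.2 i a → 0 < margNode θ.1 θ.2 i b →
      condOut θ.1 θ.2 (LB w) i a ≤ Real.exp εB * condOut θ.1 θ.2 (LB w) i b)
    -- `e_Θ(X_{T3} | X_{T2}) ≤ eInf32`:
    (hInf32 : ∀ θ ∈ Θ, ∀ (a b c : Fin k),
      0 < margNode θ.1 θ.2 T2 a → 0 < margNode θ.1 θ.2 T2 b →
      condTrans θ.1 θ.2 T3 T2 c a ≤ Real.exp eInf32 * condTrans θ.1 θ.2 T3 T2 c b)
    -- `e_Θ(X_{T2} | X_{T3}) ≤ eInf23`: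
    (hInf23 : ∀ θ ∈ Θ, ∀ (a b c : Fin k),
      0 < margNode θ.1 θ.2 T3 a → 0 < margNode θ.1 θ.2 T3 b →
      condTrans θ.1 θ.2 T2 T3 c a ≤ Real.exp eInf23 * condTrans θ.1 θ.2 T2 T3 c b) :
    ∀ θ ∈ Θ, ∀ (wA : OutA) (wB : OutB) (a b : Fin k),
      (∀ i, T1 ≤ i → i ≤ T2 →
        0 < margNode θ.1 θ.2 i a → 0 < margNode θ.1 θ.2 i b →
        condOut θ.1 θ.2 (fun x => LA wA x * LB wB x) i a ≤
          min (Real.exp (εA + εB)) (Real.exp (εA + eInf32)) *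
            condOut θ.1 θ.2 (fun x => LA wA x * LB wB x) i b) ∧
      (∀ i, T3 ≤ i → i ≤ T4 →
        0 < margNode θ.1 θ.2 i a → 0 < margNode θ.1 θ.2 i b →
        condOut θ.1 θ.2 (fun x => LA wA x * LB wB x) i a ≤
          min (Real.exp (εA + εB)) (Real.exp (εB + eInf23)) *
            condOut θ.1 θ.2 (fun x => LA wA x * LB wB x) i b) := by
  intro θ hθ wA wB a b
  obtain ⟨hq0, -, hP0, -⟩ := hΘ θ hθ
  -- Markov mixing of `M_B` through the boundary node `T2`:
  have hmixA : ∀ c d, (∑ x ∈ univ.filter (fun x : Fin (T + 1) → Fin k => x T2 = c ∧ x T3 = d),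
        jp θ.1 θ.2 x * LB wB x)
      = (∑ x ∈ univ.filter (fun x : Fin (T + 1) → Fin k => x T2 = c ∧ x T3 = d), jp θ.1 θ.2 x)
          * condOut θ.1 θ.2 (LB wB) T3 d := by
    intro c d
    have hCI := condIndep θ.1 θ.2 T3 (fun x => if x T2 = c then (1:ℝ) else 0) (LB wB)
      (fun x y hxy => by simp only [hxy T2 h23.le])
      (fun x y hxy => hLBdep wB x y (fun t ht _ => hxy t ht))
      d
    have e1 : (∑ x ∈ univ.filter (fun x : Fin (T + 1) → Fin k => x T3 = d),
        jp θ.1 θ.2 x * ((if x T2 = c then (1:ℝ) else 0) * LB wB x))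
        = ∑ x ∈ univ.filter (fun x : Fin (T + 1) → Fin k => x T2 = c ∧ x T3 = d),
          jp θ.1 θ.2 x * LB wB x := by
      rw [← sum_filter_ind (fun x : Fin (T + 1) → Fin k => x T3 = d)
        (fun x => x T2 = c) (fun x => jp θ.1 θ.2 x * LB wB x)]
      refine Finset.sum_congr rfl fun x _ => ?_
      by_cases h : x T2 = c <;> simp [h]
    have e2 : (∑ x ∈ univ.filter (fun x : Fin (T + 1) → Fin k => x T3 = d),
        jp θ.1 θ.2 x * (if x T2 = c then (1:ℝ) else 0))
        = ∑ x ∈ univ.filter (fun x : Fin (T + 1) → Fin k => x T2 = c ∧ x T3 = d),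
          jp θ.1 θ.2 x := by
      rw [← sum_filter_ind (fun x : Fin (T + 1) → Fin k => x T3 = d)
        (fun x => x T2 = c) (fun x => jp θ.1 θ.2 x)]
      refine Finset.sum_congr rfl fun x _ => ?_
      by_cases h : x T2 = c <;> simp [h]
    rw [e1, e2] at hCI
    by_cases hm : margNode θ.1 θ.2 T3 d = 0
    · rw [Finset.sum_eq_zero (fun x hx => by
        rw [jp_eq_zero hq0 hP0 hm (Finset.mem_filter.1 hx).2.2, zero_mul])]
      have hz : condOut θ.1 θ.2 (LB wB) T3 d = 0 := by
        unfold condOut; rw [hm, div_zero]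
      rw [hz, mul_zero]
    · have hco : condOut θ.1 θ.2 (LB wB) T3 d
          = (∑ x ∈ univ.filter (fun x : Fin (T + 1) → Fin k => x T3 = d),
              jp θ.1 θ.2 x * LB wB x) / margNode θ.1 θ.2 T3 d := rfl
      have hM : margNode θ.1 θ.2 T3 d
          = ∑ x ∈ univ.filter (fun x : Fin (T + 1) → Fin k => x T3 = d), jp θ.1 θ.2 x := rfl
      rw [hco, ← mul_div_assoc, eq_div_iff hm, hM]
      exact hCI
  -- Markov mixing of `M_A` through the boundary node `T3`:
  have hmixB : ∀ c d, (∑ x ∈ univ.filter (fun x : Fin (T + 1) → Fin k => x T3 = c ∧ x T2 = d),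
        jp θ.1 θ.2 x * LA wA x)
      = (∑ x ∈ univ.filter (fun x : Fin (T + 1) → Fin k => x T3 = c ∧ x T2 = d), jp θ.1 θ.2 x)
          * condOut θ.1 θ.2 (LA wA) T2 d := by
    intro c d
    have hCI := condIndep θ.1 θ.2 T2 (LA wA) (fun x => if x T3 = c then (1:ℝ) else 0)
      (fun x y hxy => hLAdep wA x y (fun t _ ht2 => hxy t ht2))
      (fun x y hxy => by simp only [hxy T3 h23.le])
      d
    have e1 : (∑ x ∈ univ.filter (fun x : Fin (T + 1) → Fin k => x T2 = d),
        jp θ.1 θ.2 x * (LA wA x * (if x T3 = c then (1:ℝ) else 0)))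
        = ∑ x ∈ univ.filter (fun x : Fin (T + 1) → Fin k => x T3 = c ∧ x T2 = d),
          jp θ.1 θ.2 x * LA wA x := by
      rw [← sum_filter_ind (fun x : Fin (T + 1) → Fin k => x T2 = d)
        (fun x => x T3 = c) (fun x => jp θ.1 θ.2 x * LA wA x)]
      refine Finset.sum_congr rfl fun x _ => ?_
      by_cases h : x T3 = c <;> simp [h]
    have e2 : (∑ x ∈ univ.filter (fun x : Fin (T + 1) → Fin k => x T2 = d),
        jp θ.1 θ.2 x * (if x T3 = c then (1:ℝ) else 0))
        = ∑ x ∈ univ.filter (fun x : Fin (T + 1) → Fin k => x T3 = c ∧ x T2 = d),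
          jp θ.1 θ.2 x := by
      rw [← sum_filter_ind (fun x : Fin (T + 1) → Fin k => x T2 = d)
        (fun x => x T3 = c) (fun x => jp θ.1 θ.2 x)]
      refine Finset.sum_congr rfl fun x _ => ?_
      by_cases h : x T3 = c <;> simp [h]
    rw [e1, e2] at hCI
    by_cases hm : margNode θ.1 θ.2 T2 d = 0
    · rw [Finset.sum_eq_zero (fun x hx => by
        rw [jp_eq_zero hq0 hP0 hm (Finset.mem_filter.1 hx).2.2, zero_mul])]
      have hz : condOut θ.1 θ.2 (LA wA) T2 d = 0 := by
        unfold condOut; rw [hm, div_zero]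
      rw [hz, mul_zero]
    · have hco : condOut θ.1 θ.2 (LA wA) T2 d
          = (∑ x ∈ univ.filter (fun x : Fin (T + 1) → Fin k => x T2 = d),
              jp θ.1 θ.2 x * LA wA x) / margNode θ.1 θ.2 T2 d := rfl
      have hM : margNode θ.1 θ.2 T2 d
          = ∑ x ∈ univ.filter (fun x : Fin (T + 1) → Fin k => x T2 = d), jp θ.1 θ.2 x := rfl
      rw [hco, ← mul_div_assoc, eq_div_iff hm, hM]
      linear_combination hCI
  -- conditional independence split for the A-side secret node:
  have hsplitA : ∀ (i : Fin (T + 1)), i ≤ T2 → ∀ (e c : Fin k),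
      ∑ x ∈ univ.filter (fun x : Fin (T + 1) → Fin k => x i = e ∧ x T2 = c),
        jp θ.1 θ.2 x * (LA wA x * LB wB x)
      = (∑ x ∈ univ.filter (fun x : Fin (T + 1) → Fin k => x i = e ∧ x T2 = c),
          jp θ.1 θ.2 x * LA wA x) * condOut θ.1 θ.2 (LB wB) T2 c := by
    intro i hi2 e c
    have hCI := condIndep θ.1 θ.2 T2
      (fun x => (if x i = e then (1:ℝ) else 0) * LA wA x) (LB wB)
      (fun x y hxy => by
        simp only [hxy i hi2, hLAdep wA x y (fun t _ ht2 => hxy t ht2)])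
      (fun x y hxy => hLBdep wB x y (fun t ht _ => hxy t (h23.le.trans ht)))
      c
    have e1 : (∑ x ∈ univ.filter (fun x : Fin (T + 1) → Fin k => x T2 = c),
        jp θ.1 θ.2 x * ((if x i = e then (1:ℝ) else 0) * LA wA x * LB wB x))
        = ∑ x ∈ univ.filter (fun x : Fin (T + 1) → Fin k => x i = e ∧ x T2 = c),
          jp θ.1 θ.2 x * (LA wA x * LB wB x) := by
      rw [← sum_filter_ind (fun x : Fin (T + 1) → Fin k => x T2 = c)
        (fun x => x i = e) (fun x => jp θ.1 θ.2 x * (LA wA x * LB wB x))]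
      refine Finset.sum_congr rfl fun x _ => ?_
      by_cases h : x i = e <;> simp [h, mul_assoc]
    have e2 : (∑ x ∈ univ.filter (fun x : Fin (T + 1) → Fin k => x T2 = c),
        jp θ.1 θ.2 x * ((if x i = e then (1:ℝ) else 0) * LA wA x))
        = ∑ x ∈ univ.filter (fun x : Fin (T + 1) → Fin k => x i = e ∧ x T2 = c),
          jp θ.1 θ.2 x * LA wA x := by
      rw [← sum_filter_ind (fun x : Fin (T + 1) → Fin k => x T2 = c)
        (fun x => x i = e) (fun x => jp θ.1 θ.2 x * LA wA x)]
      refine Finset.sum_congr rfl fun x _ => ?_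
      by_cases h : x i = e <;> simp [h]
    rw [e1, e2] at hCI
    by_cases hm : margNode θ.1 θ.2 T2 c = 0
    · rw [Finset.sum_eq_zero (fun x hx => by
        rw [jp_eq_zero hq0 hP0 hm (Finset.mem_filter.1 hx).2.2, zero_mul])]
      have hz : condOut θ.1 θ.2 (LB wB) T2 c = 0 := by
        unfold condOut; rw [hm, div_zero]
      rw [hz, mul_zero]
    · have hco : condOut θ.1 θ.2 (LB wB) T2 c
          = (∑ x ∈ univ.filter (fun x : Fin (T + 1) → Fin k => x T2 = c),
              jp θ.1 θ.2 x * LB wB x) / margNode θ.1 θ.2 T2 c := rfl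
      have hM : margNode θ.1 θ.2 T2 c
          = ∑ x ∈ univ.filter (fun x : Fin (T + 1) → Fin k => x T2 = c), jp θ.1 θ.2 x := rfl
      rw [hco, ← mul_div_assoc, eq_div_iff hm, hM]
      exact hCI
  -- conditional independence split for the B-side secret node:
  have hsplitB : ∀ (i : Fin (T + 1)), T3 ≤ i → ∀ (e c : Fin k),
      ∑ x ∈ univ.filter (fun x : Fin (T + 1) → Fin k => x i = e ∧ x T3 = c),
        jp θ.1 θ.2 x * (LB wB x * LA wA x)
      = (∑ x ∈ univ.filter (fun x : Fin (T + 1) → Fin k => x i = e ∧ x T3 = c),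
          jp θ.1 θ.2 x * LB wB x) * condOut θ.1 θ.2 (LA wA) T3 c := by
    intro i hi3 e c
    have hCI := condIndep θ.1 θ.2 T3
      (LA wA) (fun x => (if x i = e then (1:ℝ) else 0) * LB wB x)
      (fun x y hxy => hLAdep wA x y (fun t _ ht2 => hxy t (ht2.trans h23.le)))
      (fun x y hxy => by
        simp only [hxy i hi3, hLBdep wB x y (fun t ht _ => hxy t ht)])
      c
    have e1 : (∑ x ∈ univ.filter (fun x : Fin (T + 1) → Fin k => x T3 = c),
        jp θ.1 θ.2 x * (LA wA x * ((if x i = e then (1:ℝ) else 0) * LB wB x)))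
        = ∑ x ∈ univ.filter (fun x : Fin (T + 1) → Fin k => x i = e ∧ x T3 = c),
          jp θ.1 θ.2 x * (LB wB x * LA wA x) := by
      rw [← sum_filter_ind (fun x : Fin (T + 1) → Fin k => x T3 = c)
        (fun x => x i = e) (fun x => jp θ.1 θ.2 x * (LB wB x * LA wA x))]
      refine Finset.sum_congr rfl fun x _ => ?_
      by_cases h : x i = e
      · simp only [if_pos h]
        ring
      · simp [h]
    have e2 : (∑ x ∈ univ.filter (fun x : Fin (T + 1) → Fin k => x T3 = c),
        jp θ.1 θ.2 x * ((if x i = e then (1:ℝ) else 0) * LB wB x))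
        = ∑ x ∈ univ.filter (fun x : Fin (T + 1) → Fin k => x i = e ∧ x T3 = c),
          jp θ.1 θ.2 x * LB wB x := by
      rw [← sum_filter_ind (fun x : Fin (T + 1) → Fin k => x T3 = c)
        (fun x => x i = e) (fun x => jp θ.1 θ.2 x * LB wB x)]
      refine Finset.sum_congr rfl fun x _ => ?_
      by_cases h : x i = e <;> simp [h]
    rw [e1, e2] at hCI
    by_cases hm : margNode θ.1 θ.2 T3 c = 0
    · rw [Finset.sum_eq_zero (fun x hx => by
        rw [jp_eq_zero hq0 hP0 hm (Finset.mem_filter.1 hx).2.2, zero_mul])]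
      have hz : condOut θ.1 θ.2 (LA wA) T3 c = 0 := by
        unfold condOut; rw [hm, div_zero]
      rw [hz, mul_zero]
    · have hco : condOut θ.1 θ.2 (LA wA) T3 c
          = (∑ x ∈ univ.filter (fun x : Fin (T + 1) → Fin k => x T3 = c),
              jp θ.1 θ.2 x * LA wA x) / margNode θ.1 θ.2 T3 c := rfl
      have hM : margNode θ.1 θ.2 T3 c
          = ∑ x ∈ univ.filter (fun x : Fin (T + 1) → Fin k => x T3 = c), jp θ.1 θ.2 x := rfl
      rw [hco, ← mul_div_assoc, eq_div_iff hm, hM]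
      linear_combination hCI
  constructor
  · -- secrets about nodes in [T1, T2]
    intro i hi1 hi2 ha hb
    have hVbound : ∀ c c', 0 < margNode θ.1 θ.2 T2 c → 0 < margNode θ.1 θ.2 T2 c' →
        condOut θ.1 θ.2 (LB wB) T2 c
          ≤ min (Real.exp εB) (Real.exp eInf32) * condOut θ.1 θ.2 (LB wB) T2 c' :=
      fun c c' hcc hcc' => boundary hq0 hP0 T2 T3 (LB wB) (hLB0 wB) hmixA εB eInf32
        (fun d d' => hB θ hθ T3 le_rfl h34.le d d' wB)
        (fun c c' d => hInf32 θ hθ c c' d) c c' hcc hcc'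
    have hcore := core hq0 hP0 i T2 (LA wA) (LB wB) (hLA0 wA) (hLB0 wB)
      (hsplitA i hi2) a b ha hb εA (min (Real.exp εB) (Real.exp eInf32))
      (le_min (Real.exp_pos εB).le (Real.exp_pos eInf32).le)
      (hA θ hθ i hi1 hi2 a b wA ha hb) hVbound
    have hconst : min (Real.exp (εA + εB)) (Real.exp (εA + eInf32))
        = Real.exp εA * min (Real.exp εB) (Real.exp eInf32) := by
      rw [mul_min_of_nonneg _ _ (Real.exp_pos εA).le, ← Real.exp_add, ← Real.exp_add]
    rw [hconst]
    exact hcore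
  · -- secrets about nodes in [T3, T4]
    intro i hi3 hi4 ha hb
    have hVbound : ∀ c c', 0 < margNode θ.1 θ.2 T3 c → 0 < margNode θ.1 θ.2 T3 c' →
        condOut θ.1 θ.2 (LA wA) T3 c
          ≤ min (Real.exp εA) (Real.exp eInf23) * condOut θ.1 θ.2 (LA wA) T3 c' :=
      fun c c' hcc hcc' => boundary hq0 hP0 T3 T2 (LA wA) (hLA0 wA) hmixB εA eInf23
        (fun d d' => hA θ hθ T2 h12.le le_rfl d d' wA)
        (fun c c' d => hInf23 θ hθ c c' d) c c' hcc hcc'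
    have hcore := core hq0 hP0 i T3 (LB wB) (LA wA) (hLB0 wB) (hLA0 wA)
      (hsplitB i hi3) a b ha hb εB (min (Real.exp εA) (Real.exp eInf23))
      (le_min (Real.exp_pos εA).le (Real.exp_pos eInf23).le)
      (hB θ hθ i hi3 hi4 a b wB ha hb) hVbound
    have hswap : ∀ e, condOut θ.1 θ.2 (fun x => LA wA x * LB wB x) i e
        = condOut θ.1 θ.2 (fun x => LB wB x * LA wA x) i e :=
      fun e => condOut_congr (fun x => mul_comm _ _) i e
    rw [hswap a, hswap b]
    have hconst : min (Real.exp (εA + εB)) (Real.exp (εB + eInf23))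
        = Real.exp εB * min (Real.exp εA) (Real.exp eInf23) := by
      rw [mul_min_of_nonneg _ _ (Real.exp_pos εB).le, ← Real.exp_add, ← Real.exp_add,
        add_comm εB εA]
    rw [hconst]
    exact hcore
end

section
/- Pufferfish guarantee of the Markov Quilt Mechanism components (joint with remote nodes): Let $X$ be a finite family of discrete random variables with distribution $\theta$, $F$ a 1-Lipschitz query (changing any single variable's value changes $F$ by at most 1), and $X_i$ a node with Markov Quilt $X_Q$, nearby set $X_N \ni X_i$, remote set $X_R$. Suppose $\sigma_{\max} \ge |X_N| / (\epsilon - e_\theta(X_Q \mid X_i))$ where $e_\theta(X_Q \mid X_i) < \epsilon$ is the max-influence of $X_i$ on $X_Q$, and let $Z \sim \mathrm{Lap}(1)$. Then for all outputs $w$, all realizations $x_{R \cup Q}$ of $X_{R \cup Q} = X_R \cup X_Q$, and all values $a, b$: $\frac{P(F(X) + \sigma_{\max} Z = w, X_{R\cup Q} = x_{R\cup Q} \mid X_i = a, \theta)}{P(F(X) + \sigma_{\max} Z = w, X_{R\cup Q} = x_{R\cup Q} \mid X_i = b, \theta)} \le e^{\epsilon}$. -/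
open Finset

/-- Density of `σ · Z` where `Z ∼ Lap(1)`. -/
noncomputable def lapDen (σ z : ℝ) : ℝ := 1 / (2 * σ) * Real.exp (-|z| / σ)

/-- Marginal probability of `X i = a` under the joint distribution `θ`. -/
noncomputable def margI {V : Type*} [Fintype V] [DecidableEq V] {k : ℕ}
    (θ : (V → Fin k) → ℝ) (i : V) (a : Fin k) : ℝ :=
  ∑ y ∈ univ.filter (fun y : V → Fin k => y i = a), θ y

lemma lapDen_nonneg {σ : ℝ} (hσ : 0 < σ) (z : ℝ) : 0 ≤ lapDen σ z := by
  unfold lapDen; positivity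

lemma lapDen_ratio {σ c : ℝ} (hσ : 0 < σ) {z1 z2 : ℝ}
    (h : |z1 - z2| ≤ c) : lapDen σ z1 ≤ Real.exp (c / σ) * lapDen σ z2 := by
  unfold lapDen
  rw [mul_comm (Real.exp (c / σ)), mul_assoc]
  apply mul_le_mul_of_nonneg_left _ (by positivity)
  rw [← Real.exp_add]
  apply Real.exp_le_exp.mpr
  have h2 : |z2| - |z1| ≤ c := le_trans (abs_sub_abs_le_abs_sub z2 z1)
    (by rwa [abs_sub_comm])
  rw [← add_div, div_le_div_iff₀ hσ hσ]
  nlinarith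


/-- **Pufferfish guarantee of the Markov Quilt Mechanism components (joint with
remote nodes)**: for a 1-Lipschitz query `F`, a node `i` with Markov Quilt `Q`,
nearby set `N ∋ i` and remote set `R` (with `X_R ⊥ X_i | X_Q`), max-influence of
`X_i` on `X_Q` at most `eQ < ε`, and Laplace noise scale
`σmax ≥ |N| / (ε - eQ)`, the joint likelihood ratio
`P(F(X)+σmax·Z = w, X_{R∪Q} = x_{R∪Q} | X_i = a) /
 P(F(X)+σmax·Z = w, X_{R∪Q} = x_{R∪Q} | X_i = b)` is at most `e^ε`. -/
theorem mqm_joint_ratio_bound {V : Type*} [Fintype V] [DecidableEq V] {k : ℕ}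
    (θ : (V → Fin k) → ℝ) (hθ0 : ∀ x, 0 ≤ θ x) (hθ1 : ∑ x, θ x = 1)
    (F : (V → Fin k) → ℝ)
    -- `F` is 1-Lipschitz: changing any set of variables changes `F` by at most its size
    (hF : ∀ x y : V → Fin k, |F x - F y| ≤ (univ.filter fun v => x v ≠ y v).card)
    (i : V) (Q N R : Finset V)
    (hiN : i ∈ N) (hQN : Disjoint Q N) (hQR : Disjoint Q R) (hNR : Disjoint N R)
    (hcover : Q ∪ N ∪ R = univ)
    -- `X_R` is conditionally independent of `X_i` given `X_Q` (cross-multiplied form):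
    (hCI : ∀ (x0 : V → Fin k) (a b : Fin k),
      (∑ x ∈ univ.filter (fun x : V → Fin k =>
          (∀ v ∈ Q ∪ R, x v = x0 v) ∧ x i = a), θ x) *
      (∑ x ∈ univ.filter (fun x : V → Fin k =>
          (∀ v ∈ Q, x v = x0 v) ∧ x i = b), θ x) =
      (∑ x ∈ univ.filter (fun x : V → Fin k =>
          (∀ v ∈ Q ∪ R, x v = x0 v) ∧ x i = b), θ x) *
      (∑ x ∈ univ.filter (fun x : V → Fin k =>
          (∀ v ∈ Q, x v = x0 v) ∧ x i = a), θ x))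
    (ε eQ σmax : ℝ) (heQ0 : 0 ≤ eQ) (heQ : eQ < ε) (hσpos : 0 < σmax)
    -- max-influence of `X_i` on `X_Q` is at most `eQ`:
    (hInf : ∀ (x0 : V → Fin k) (a b : Fin k),
      0 < margI θ i a → 0 < margI θ i b →
      (∑ x ∈ univ.filter (fun x : V → Fin k =>
          (∀ v ∈ Q, x v = x0 v) ∧ x i = a), θ x) / margI θ i a ≤
      Real.exp eQ *
        ((∑ x ∈ univ.filter (fun x : V → Fin k =>
            (∀ v ∈ Q, x v = x0 v) ∧ x i = b), θ x) / margI θ i b))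
    (hσ : σmax ≥ (N.card : ℝ) / (ε - eQ)) :
    ∀ (w : ℝ) (x0 : V → Fin k) (a b : Fin k),
      0 < margI θ i a → 0 < margI θ i b →
      (∑ x ∈ univ.filter (fun x : V → Fin k =>
          (∀ v ∈ Q ∪ R, x v = x0 v) ∧ x i = a),
        θ x * lapDen σmax (w - F x)) / margI θ i a ≤
      Real.exp ε *
        ((∑ x ∈ univ.filter (fun x : V → Fin k =>
            (∀ v ∈ Q ∪ R, x v = x0 v) ∧ x i = b),
          θ x * lapDen σmax (w - F x)) / margI θ i b) := by
  intro w x0 a b ha hb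
  set Ma := margI θ i a with hMa
  set Mb := margI θ i b with hMb
  set A := univ.filter (fun x : V → Fin k => (∀ v ∈ Q ∪ R, x v = x0 v) ∧ x i = a) with hA
  set B := univ.filter (fun x : V → Fin k => (∀ v ∈ Q ∪ R, x v = x0 v) ∧ x i = b) with hB
  set Aq := univ.filter (fun x : V → Fin k => (∀ v ∈ Q, x v = x0 v) ∧ x i = a) with hAq
  set Bq := univ.filter (fun x : V → Fin k => (∀ v ∈ Q, x v = x0 v) ∧ x i = b) with hBq
  set Sa := ∑ x ∈ A, θ x * lapDen σmax (w - F x) with hSa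
  set Sb := ∑ x ∈ B, θ x * lapDen σmax (w - F x) with hSb
  set PA := ∑ x ∈ A, θ x with hPA
  set PB := ∑ x ∈ B, θ x with hPB
  set Ta := ∑ x ∈ Aq, θ x with hTa
  set Tb := ∑ x ∈ Bq, θ x with hTb
  have hεe : (0:ℝ) < ε - eQ := by linarith
  have hSa0 : 0 ≤ Sa := Finset.sum_nonneg fun x _ =>
    mul_nonneg (hθ0 x) (lapDen_nonneg hσpos _)
  have hSb0 : 0 ≤ Sb := Finset.sum_nonneg fun x _ =>
    mul_nonneg (hθ0 x) (lapDen_nonneg hσpos _)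
  have hPA0 : 0 ≤ PA := Finset.sum_nonneg fun x _ => hθ0 x
  have hPB0 : 0 ≤ PB := Finset.sum_nonneg fun x _ => hθ0 x
  have hTa0 : 0 ≤ Ta := Finset.sum_nonneg fun x _ => hθ0 x
  have hTb0 : 0 ≤ Tb := Finset.sum_nonneg fun x _ => hθ0 x
  -- If PA = 0 then Sa = 0 and the goal holds
  have hfin : PA = 0 → Sa / Ma ≤ Real.exp ε * (Sb / Mb) := by
    intro h0
    have hz : ∀ x ∈ A, θ x = 0 :=
      (Finset.sum_eq_zero_iff_of_nonneg fun x _ => hθ0 x).mp h0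
    have : Sa = 0 := Finset.sum_eq_zero fun x hx => by rw [hz x hx, zero_mul]
    rw [this, zero_div]
    exact mul_nonneg (Real.exp_nonneg _) (div_nonneg hSb0 hb.le)
  -- A ⊆ Aq
  have hAAq : A ⊆ Aq := by
    intro x hx
    simp only [hA, hAq, mem_filter, mem_univ, true_and] at hx ⊢
    exact ⟨fun v hv => hx.1 v (mem_union_left R hv), hx.2⟩
  have hPATa : PA ≤ Ta :=
    Finset.sum_le_sum_of_subset_of_nonneg hAAq fun x _ _ => hθ0 x
  -- key3 : Ta * Mb ≤ exp eQ * (Tb * Ma)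
  have hInf' : Ta / Ma ≤ Real.exp eQ * (Tb / Mb) := hInf x0 a b ha hb
  have key3 : Ta * Mb ≤ Real.exp eQ * (Tb * Ma) := by
    have h := hInf'
    rw [← mul_div_assoc, div_le_div_iff₀ ha hb] at h
    linarith [h]
  by_cases hTbpos : 0 < Tb
  · by_cases hPBpos : 0 < PB
    · -- main case
      -- key1 : Sa * PB ≤ exp (ε - eQ) * (PA * Sb)
      have hNbd : (N.card : ℝ) / σmax ≤ ε - eQ := by
        rw [div_le_iff₀ hσpos]
        have := (div_le_iff₀ hεe).mp hσ
        linarith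
      have key1 : Sa * PB ≤ Real.exp (ε - eQ) * (PA * Sb) := by
        rw [hSa, hPB, Finset.sum_mul_sum]
        have hrhs : Real.exp (ε - eQ) * (PA * Sb) =
            ∑ x ∈ A, ∑ y ∈ B,
              Real.exp (ε - eQ) * (θ x * (θ y * lapDen σmax (w - F y))) := by
          rw [hPA, hSb, Finset.sum_mul_sum, Finset.mul_sum]
          exact Finset.sum_congr rfl fun x _ => by rw [Finset.mul_sum]
        rw [hrhs]
        refine Finset.sum_le_sum fun x hx => Finset.sum_le_sum fun y hy => ?_
        simp only [hA, hB, mem_filter, mem_univ, true_and] at hx hy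
        -- differing coordinates lie in N
        have hsub : (univ.filter fun v => x v ≠ y v) ⊆ N := by
          intro v hv
          simp only [mem_filter, mem_univ, true_and] at hv
          have hvU : v ∈ Q ∪ N ∪ R := by rw [hcover]; exact mem_univ v
          rcases mem_union.mp hvU with hvQN | hvR
          · rcases mem_union.mp hvQN with hvQ | hvN
            · exact absurd ((hx.1 v (mem_union_left R hvQ)).trans
                (hy.1 v (mem_union_left R hvQ)).symm) hv
            · exact hvN
          · exact absurd ((hx.1 v (mem_union_right Q hvR)).trans
              (hy.1 v (mem_union_right Q hvR)).symm) hv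
        have hFd : |F x - F y| ≤ (N.card : ℝ) := by
          refine le_trans (hF x y) ?_
          exact_mod_cast Finset.card_le_card hsub
        have hlap : lapDen σmax (w - F x) ≤
            Real.exp (ε - eQ) * lapDen σmax (w - F y) := by
          have h1 : |(w - F x) - (w - F y)| ≤ (N.card : ℝ) := by
            rw [show (w - F x) - (w - F y) = -(F x - F y) by ring, abs_neg]
            exact hFd
          refine le_trans (lapDen_ratio hσpos h1) ?_
          exact mul_le_mul_of_nonneg_right (Real.exp_le_exp.mpr hNbd)
            (lapDen_nonneg hσpos _)
        calc θ x * lapDen σmax (w - F x) * θ y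
            = (θ x * θ y) * lapDen σmax (w - F x) := by ring
          _ ≤ (θ x * θ y) * (Real.exp (ε - eQ) * lapDen σmax (w - F y)) :=
              mul_le_mul_of_nonneg_left hlap (mul_nonneg (hθ0 x) (hθ0 y))
          _ = Real.exp (ε - eQ) * (θ x * (θ y * lapDen σmax (w - F y))) := by ring
      have key2 : PA * Tb = PB * Ta := hCI x0 a b
      have h4 : Sa * Mb * (PB * Tb) ≤ Real.exp ε * Sb * Ma * (PB * Tb) := by
        calc Sa * Mb * (PB * Tb) = (Sa * PB) * (Mb * Tb) := by ring
          _ ≤ (Real.exp (ε - eQ) * (PA * Sb)) * (Mb * Tb) :=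
              mul_le_mul_of_nonneg_right key1
                (mul_nonneg hb.le hTb0)
          _ = Real.exp (ε - eQ) * Sb * (PA * Tb) * Mb := by ring
          _ = Real.exp (ε - eQ) * Sb * (PB * Ta) * Mb := by rw [key2]
          _ = (Real.exp (ε - eQ) * Sb * PB) * (Ta * Mb) := by ring
          _ ≤ (Real.exp (ε - eQ) * Sb * PB) * (Real.exp eQ * (Tb * Ma)) :=
              mul_le_mul_of_nonneg_left key3
                (mul_nonneg (mul_nonneg (Real.exp_nonneg _) hSb0) hPB0)
          _ = (Real.exp (ε - eQ) * Real.exp eQ) * Sb * Ma * (PB * Tb) := by ring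
          _ = Real.exp ε * Sb * Ma * (PB * Tb) := by
              rw [← Real.exp_add]; ring_nf
      have h5 : Sa * Mb ≤ Real.exp ε * Sb * Ma :=
        le_of_mul_le_mul_right h4 (mul_pos hPBpos hTbpos)
      rw [show Real.exp ε * (Sb / Mb) = (Real.exp ε * Sb) / Mb from
        (mul_div_assoc _ _ _).symm, div_le_div_iff₀ ha hb]
      linarith [h5]
    · -- PB = 0 case
      have hPB' : PB = 0 := le_antisymm (not_lt.mp hPBpos) hPB0
      have key2 : PA * Tb = PB * Ta := hCI x0 a b
      have : PA * Tb = 0 := by rw [key2, hPB', zero_mul]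
      exact hfin ((mul_eq_zero.mp this).resolve_right (ne_of_gt hTbpos))
  · -- Tb = 0 case
    have hTb' : Tb = 0 := le_antisymm (not_lt.mp hTbpos) hTb0
    have : Ta / Ma ≤ 0 := by
      rw [hTb'] at hInf'
      simpa using hInf'
    have hTa' : Ta ≤ 0 := by
      by_contra hc
      push_neg at hc
      exact absurd (div_pos hc ha) (not_lt.mpr this)
    exact hfin (le_antisymm (hPATa.trans hTa') hPA0)
end

section
/- Subadditivity of max-influence over combined quilts (two-sided chain version): Let $X_1 \to \cdots \to X_T$ be a Markov chain with finite state space, fix node $X_i$, and let $a^1, a^2 \ge 1$ and $b^1, b^2 \ge 1$ be offsets with $i - a^j \ge 1$ and $i + b^j \le T$. Then $e_\theta(\{X_{i-a^1}, X_{i+b^1}\} \mid X_i) + e_\theta(\{X_{i-a^2}, X_{i+b^2}\} \mid X_i) \ge e_\theta(\{X_{i - \min(a^1,a^2)}, X_{i + \min(b^1,b^2)}\} \mid X_i)$, where $e_\theta(\cdot \mid X_i)$ denotes max-influence. -/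
open Finset

/-- Conditional probability `P(X_A = x0|_A | X_i = u)`. -/
noncomputable def condSet {k T : ℕ} (q : Fin k → ℝ) (P : Fin k → Fin k → ℝ)
    (A : Finset (Fin (T + 1))) (x0 : Fin (T + 1) → Fin k)
    (i : Fin (T + 1)) (u : Fin k) : ℝ :=
  (∑ x ∈ univ.filter (fun x : Fin (T + 1) → Fin k =>
      (∀ j ∈ A, x j = x0 j) ∧ x i = u), jp q P x) / margNode q P i u

/-- Max-influence `e_θ(X_A | X_i)` of node `X_i` on the set of nodes `X_A` in the
chain: supremum of log likelihood ratios of the conditional distribution of `X_A`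
over pairs of positive-probability values of `X_i`. -/
noncomputable def chainMaxInfl {k T : ℕ} (q : Fin k → ℝ) (P : Fin k → Fin k → ℝ)
    (A : Finset (Fin (T + 1))) (i : Fin (T + 1)) : ℝ :=
  sSup { r : ℝ | ∃ (u v : Fin k) (x0 : Fin (T + 1) → Fin k),
    0 < margNode q P i u ∧ 0 < margNode q P i v ∧
    0 < condSet q P A x0 i u ∧ 0 < condSet q P A x0 i v ∧
    r = Real.log (condSet q P A x0 i u / condSet q P A x0 i v) }

/-- The node `a` steps to the left of `i`. -/
def lnode {T : ℕ} (i : Fin (T + 1)) (a : ℕ) : Fin (T + 1) :=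
  ⟨i.val - a, lt_of_le_of_lt (Nat.sub_le _ _) i.isLt⟩

/-- The node `b` steps to the right of `i` (truncated at `T`). -/
def rnode {T : ℕ} (i : Fin (T + 1)) (b : ℕ) : Fin (T + 1) :=
  ⟨min (i.val + b) T, Nat.lt_succ_of_le (min_le_right _ _)⟩

section Aux

variable {k T : ℕ} (q : Fin k → ℝ) (P : Fin k → Fin k → ℝ)

noncomputable def numS (A : Finset (Fin (T + 1))) (x0 : Fin (T + 1) → Fin k)
    (i : Fin (T + 1)) (u : Fin k) : ℝ :=
  ∑ x ∈ univ.filter (fun x : Fin (T + 1) → Fin k =>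
      (∀ j ∈ A, x j = x0 j) ∧ x i = u), jp q P x

lemma condSet_eq (A : Finset (Fin (T + 1))) (x0 : Fin (T + 1) → Fin k)
    (i : Fin (T + 1)) (u : Fin k) :
    condSet q P A x0 i u = numS q P A x0 i u / margNode q P i u := rfl

variable (hq0 : ∀ s, 0 < q s) (hP0 : ∀ s s', 0 < P s s')

include hq0 hP0

lemma jp_pos (x : Fin (T + 1) → Fin k) : 0 < jp q P x :=
  mul_pos (hq0 _) (Finset.prod_pos fun _ _ => hP0 _ _)

lemma margNode_pos (i : Fin (T + 1)) (u : Fin k) : 0 < margNode q P i u := by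
  apply Finset.sum_pos (fun x _ => jp_pos q P hq0 hP0 x)
  exact ⟨fun _ => u, by simp⟩

lemma numS_pos (A : Finset (Fin (T + 1))) (x0 : Fin (T + 1) → Fin k)
    (i : Fin (T + 1)) (u : Fin k) (hiA : i ∉ A) : 0 < numS q P A x0 i u := by
  apply Finset.sum_pos (fun x _ => jp_pos q P hq0 hP0 x)
  refine ⟨fun j => if j = i then u else x0 j, ?_⟩
  simp only [mem_filter, mem_univ, true_and]
  constructor
  · intro j hj
    have : j ≠ i := fun h => hiA (h ▸ hj)
    simp [this]
  · simp

lemma condSet_pos (A : Finset (Fin (T + 1))) (x0 : Fin (T + 1) → Fin k)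
    (i : Fin (T + 1)) (u : Fin k) (hiA : i ∉ A) : 0 < condSet q P A x0 i u :=
  div_pos (numS_pos q P hq0 hP0 A x0 i u hiA) (margNode_pos q P hq0 hP0 i u)

end Aux


def splice {k T : ℕ} (i : Fin (T + 1)) (x y : Fin (T + 1) → Fin k) :
    Fin (T + 1) → Fin k :=
  fun j => if j.val ≤ i.val then x j else y j

lemma splice_le {k T : ℕ} (i j : Fin (T + 1)) (x y : Fin (T + 1) → Fin k)
    (h : j.val ≤ i.val) : splice i x y j = x j := if_pos h

lemma splice_gt {k T : ℕ} (i j : Fin (T + 1)) (x y : Fin (T + 1) → Fin k)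
    (h : i.val < j.val) : splice i x y j = y j := if_neg (not_le.mpr h)

lemma splice_splice {k T : ℕ} (i : Fin (T + 1)) (x y : Fin (T + 1) → Fin k) :
    splice i (splice i x y) (splice i y x) = x := by
  funext j
  by_cases h : j.val ≤ i.val
  · rw [splice_le _ _ _ _ h, splice_le _ _ _ _ h]
  · rw [splice_gt _ _ _ _ (not_le.mp h), splice_gt _ _ _ _ (not_le.mp h)]

lemma splice_term {k T : ℕ} (P : Fin k → Fin k → ℝ)
    (i : Fin (T + 1)) (x y : Fin (T + 1) → Fin k) (hxy : x i = y i) (t : Fin T) :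
    P (x t.castSucc) (x t.succ) * P (y t.castSucc) (y t.succ) =
      P (splice i x y t.castSucc) (splice i x y t.succ) *
        P (splice i y x t.castSucc) (splice i y x t.succ) := by
  have hcs : (t.castSucc : Fin (T + 1)).val = t.val := rfl
  have hs : (t.succ : Fin (T + 1)).val = t.val + 1 := rfl
  rcases lt_trichotomy t.val i.val with h | h | h
  · rw [splice_le i t.castSucc x y (by omega), splice_le i t.succ x y (by omega),
      splice_le i t.castSucc y x (by omega), splice_le i t.succ y x (by omega)]
  · have hti : (t.castSucc : Fin (T + 1)) = i := Fin.ext (by omega)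
    rw [splice_le i t.castSucc x y (by omega), splice_gt i t.succ x y (by omega),
      splice_le i t.castSucc y x (by omega), splice_gt i t.succ y x (by omega)]
    rw [hti, hxy]
    ring
  · rw [splice_gt i t.castSucc x y (by omega), splice_gt i t.succ x y (by omega),
      splice_gt i t.castSucc y x (by omega), splice_gt i t.succ y x (by omega)]
    ring

lemma jp_splice_mul {k T : ℕ} (q : Fin k → ℝ) (P : Fin k → Fin k → ℝ)
    (i : Fin (T + 1)) (x y : Fin (T + 1) → Fin k) (hxy : x i = y i) :
    jp q P x * jp q P y = jp q P (splice i x y) * jp q P (splice i y x) := by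
  unfold jp
  rw [splice_le i 0 x y (Nat.zero_le _), splice_le i 0 y x (Nat.zero_le _)]
  have key : ∏ t : Fin T, (P (x t.castSucc) (x t.succ) * P (y t.castSucc) (y t.succ)) =
      ∏ t : Fin T, (P (splice i x y t.castSucc) (splice i x y t.succ) *
        P (splice i y x t.castSucc) (splice i y x t.succ)) :=
    Finset.prod_congr rfl fun t _ => splice_term P i x y hxy t
  calc (q (x 0) * ∏ t : Fin T, P (x t.castSucc) (x t.succ)) *
      (q (y 0) * ∏ t : Fin T, P (y t.castSucc) (y t.succ))
      = (q (x 0) * q (y 0)) *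
        ∏ t : Fin T, (P (x t.castSucc) (x t.succ) * P (y t.castSucc) (y t.succ)) := by
        rw [Finset.prod_mul_distrib]; ring
    _ = (q (x 0) * q (y 0)) *
        ∏ t : Fin T, (P (splice i x y t.castSucc) (splice i x y t.succ) *
          P (splice i y x t.castSucc) (splice i y x t.succ)) := by rw [key]
    _ = _ := by rw [Finset.prod_mul_distrib]; ring


lemma numS_factor {k T : ℕ} (q : Fin k → ℝ) (P : Fin k → Fin k → ℝ)
    (l r i : Fin (T + 1)) (hl : l.val < i.val) (hr : i.val < r.val)
    (x0 : Fin (T + 1) → Fin k) (u : Fin k) :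
    numS q P {l, r} x0 i u * numS q P ∅ x0 i u =
      numS q P {l} x0 i u * numS q P {r} x0 i u := by
  unfold numS
  rw [Finset.sum_mul_sum, Finset.sum_mul_sum, ← Finset.sum_product', ← Finset.sum_product']
  apply Finset.sum_nbij' (fun p => (splice i p.1 p.2, splice i p.2 p.1))
    (fun p => (splice i p.1 p.2, splice i p.2 p.1))
  · rintro ⟨x, y⟩ hp
    rw [Finset.mem_product, mem_filter, mem_filter] at hp
    obtain ⟨⟨-, hxA, hxi⟩, -, -, hyi⟩ := hp
    simp only [Finset.mem_insert, Finset.mem_singleton, forall_eq_or_imp, forall_eq] at hxA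
    rw [Finset.mem_product, mem_filter, mem_filter]
    refine ⟨⟨mem_univ _, ?_, ?_⟩, mem_univ _, ?_, ?_⟩
    · simp only [Finset.mem_singleton, forall_eq]
      rw [splice_le i l x y (le_of_lt hl)]; exact hxA.1
    · show splice i x y i = u
      rw [splice_le i i x y le_rfl]; exact hxi
    · simp only [Finset.mem_singleton, forall_eq]
      rw [splice_gt i r y x hr]; exact hxA.2
    · show splice i y x i = u
      rw [splice_le i i y x le_rfl]; exact hyi
  · rintro ⟨x, y⟩ hp
    rw [Finset.mem_product, mem_filter, mem_filter] at hp
    obtain ⟨⟨-, hxA, hxi⟩, -, hyA, hyi⟩ := hp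
    simp only [Finset.mem_singleton, forall_eq] at hxA hyA
    rw [Finset.mem_product, mem_filter, mem_filter]
    refine ⟨⟨mem_univ _, ?_, ?_⟩, mem_univ _, fun j hj => absurd hj (by simp), ?_⟩
    · simp only [Finset.mem_insert, Finset.mem_singleton, forall_eq_or_imp, forall_eq]
      constructor
      · rw [splice_le i l x y (le_of_lt hl)]; exact hxA
      · rw [splice_gt i r x y hr]; exact hyA
    · show splice i x y i = u
      rw [splice_le i i x y le_rfl]; exact hxi
    · show splice i y x i = u
      rw [splice_le i i y x le_rfl]; exact hyi
  · rintro ⟨x, y⟩ _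
    simp only [Prod.mk.injEq]
    exact ⟨splice_splice i x y, splice_splice i y x⟩
  · rintro ⟨x, y⟩ _
    simp only [Prod.mk.injEq]
    exact ⟨splice_splice i x y, splice_splice i y x⟩
  · rintro ⟨x, y⟩ hp
    rw [Finset.mem_product, mem_filter, mem_filter] at hp
    exact jp_splice_mul q P i x y (hp.1.2.2.trans hp.2.2.2.symm)


lemma numS_empty {k T : ℕ} (q : Fin k → ℝ) (P : Fin k → Fin k → ℝ)
    (x0 : Fin (T + 1) → Fin k) (i : Fin (T + 1)) (u : Fin k) :
    numS q P ∅ x0 i u = margNode q P i u := by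
  unfold numS margNode
  congr 1
  apply Finset.filter_congr
  simp

lemma condSet_factor {k T : ℕ} (q : Fin k → ℝ) (P : Fin k → Fin k → ℝ)
    (l r i : Fin (T + 1)) (hl : l.val < i.val) (hr : i.val < r.val)
    (x0 : Fin (T + 1) → Fin k) (u : Fin k) (hM : 0 < margNode q P i u) :
    condSet q P {l, r} x0 i u = condSet q P {l} x0 i u * condSet q P {r} x0 i u := by
  have h := numS_factor q P l r i hl hr x0 u
  rw [numS_empty] at h
  show numS q P {l,r} x0 i u / margNode q P i u =
    (numS q P {l} x0 i u / margNode q P i u) * (numS q P {r} x0 i u / margNode q P i u)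
  field_simp
  rw [← h]

lemma numS_congr {k T : ℕ} (q : Fin k → ℝ) (P : Fin k → Fin k → ℝ)
    (A : Finset (Fin (T + 1))) (x0 x1 : Fin (T + 1) → Fin k)
    (i : Fin (T + 1)) (u : Fin k) (h : ∀ j ∈ A, x0 j = x1 j) :
    numS q P A x0 i u = numS q P A x1 i u := by
  unfold numS
  congr 1
  apply Finset.filter_congr
  intro x _
  constructor
  · rintro ⟨h1, h2⟩; exact ⟨fun j hj => (h1 j hj).trans (h j hj), h2⟩
  · rintro ⟨h1, h2⟩; exact ⟨fun j hj => (h1 j hj).trans (h j hj).symm, h2⟩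

lemma sum_numS_update {k T : ℕ} (q : Fin k → ℝ) (P : Fin k → Fin k → ℝ)
    (r i : Fin (T + 1)) (x0 : Fin (T + 1) → Fin k) (u : Fin k) :
    ∑ β : Fin k, numS q P {r} (Function.update x0 r β) i u = margNode q P i u := by
  unfold numS margNode
  rw [← Finset.sum_fiberwise_of_maps_to (g := fun x : Fin (T + 1) → Fin k => x r)
    (t := (univ : Finset (Fin k))) (fun _ _ => mem_univ _) (jp q P)]
  apply Finset.sum_congr rfl
  intro β _
  congr 1
  rw [Finset.filter_filter]
  apply Finset.filter_congr
  intro x _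
  simp only [Finset.mem_singleton, forall_eq, Function.update_self]
  tauto


lemma condSet_eq' {k T : ℕ} (q : Fin k → ℝ) (P : Fin k → Fin k → ℝ)
    (A : Finset (Fin (T + 1))) (x0 : Fin (T + 1) → Fin k)
    (i : Fin (T + 1)) (u : Fin k) :
    condSet q P A x0 i u = numS q P A x0 i u / margNode q P i u := rfl

lemma condSet_congr {k T : ℕ} (q : Fin k → ℝ) (P : Fin k → Fin k → ℝ)
    (A : Finset (Fin (T + 1))) (x0 x1 : Fin (T + 1) → Fin k)
    (i : Fin (T + 1)) (u : Fin k) (h : ∀ j ∈ A, x0 j = x1 j) :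
    condSet q P A x0 i u = condSet q P A x1 i u := by
  rw [condSet_eq', condSet_eq', numS_congr q P A x0 x1 i u h]

lemma bddAbove_inflSet {k T : ℕ} (q : Fin k → ℝ) (P : Fin k → Fin k → ℝ)
    (A : Finset (Fin (T + 1))) (i : Fin (T + 1)) :
    BddAbove { r : ℝ | ∃ (u v : Fin k) (x0 : Fin (T + 1) → Fin k),
      0 < margNode q P i u ∧ 0 < margNode q P i v ∧
      0 < condSet q P A x0 i u ∧ 0 < condSet q P A x0 i v ∧
      r = Real.log (condSet q P A x0 i u / condSet q P A x0 i v) } := by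
  apply Set.Finite.bddAbove
  apply Set.Finite.subset (Set.finite_range
    (fun p : Fin k × Fin k × (Fin (T + 1) → Fin k) =>
      Real.log (condSet q P A p.2.2 i p.1 / condSet q P A p.2.2 i p.2.1)))
  rintro r ⟨u, v, x0, -, -, -, -, rfl⟩
  exact ⟨(u, v, x0), rfl⟩

lemma zero_mem_inflSet {k T : ℕ} (q : Fin k → ℝ) (P : Fin k → Fin k → ℝ)
    (hq0 : ∀ s, 0 < q s) (hP0 : ∀ s s', 0 < P s s')
    (A : Finset (Fin (T + 1))) (i : Fin (T + 1)) (hiA : i ∉ A) (u : Fin k)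
    (x0 : Fin (T + 1) → Fin k) :
    (0 : ℝ) ∈ { r : ℝ | ∃ (u v : Fin k) (x0 : Fin (T + 1) → Fin k),
      0 < margNode q P i u ∧ 0 < margNode q P i v ∧
      0 < condSet q P A x0 i u ∧ 0 < condSet q P A x0 i v ∧
      r = Real.log (condSet q P A x0 i u / condSet q P A x0 i v) } := by
  refine ⟨u, u, x0, margNode_pos q P hq0 hP0 i u, margNode_pos q P hq0 hP0 i u,
    condSet_pos q P hq0 hP0 A x0 i u hiA, condSet_pos q P hq0 hP0 A x0 i u hiA, ?_⟩
  rw [div_self (ne_of_gt (condSet_pos q P hq0 hP0 A x0 i u hiA)), Real.log_one]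

lemma chainMaxInfl_nonneg {k T : ℕ} (q : Fin k → ℝ) (P : Fin k → Fin k → ℝ)
    (hq0 : ∀ s, 0 < q s) (hP0 : ∀ s s', 0 < P s s')
    (A : Finset (Fin (T + 1))) (i : Fin (T + 1)) (hiA : i ∉ A) (u : Fin k)
    (x0 : Fin (T + 1) → Fin k) :
    0 ≤ chainMaxInfl q P A i :=
  le_csSup (bddAbove_inflSet q P A i) (zero_mem_inflSet q P hq0 hP0 A i hiA u x0)

lemma exists_good_beta {k T : ℕ} (q : Fin k → ℝ) (P : Fin k → Fin k → ℝ)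
    (hq0 : ∀ s, 0 < q s) (hP0 : ∀ s s', 0 < P s s')
    (r i : Fin (T + 1)) (x0 : Fin (T + 1) → Fin k) (u v : Fin k) :
    ∃ β : Fin k, condSet q P {r} (Function.update x0 r β) i v ≤
      condSet q P {r} (Function.update x0 r β) i u := by
  by_contra hcon
  push_neg at hcon
  have hsum : ∀ w : Fin k,
      ∑ β : Fin k, condSet q P {r} (Function.update x0 r β) i w = 1 := by
    intro w
    have hM := margNode_pos q P hq0 hP0 i w
    simp only [condSet_eq']
    rw [← Finset.sum_div, sum_numS_update, div_self (ne_of_gt hM)]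
  have : (1 : ℝ) < 1 := by
    calc (1 : ℝ) = ∑ β : Fin k, condSet q P {r} (Function.update x0 r β) i u :=
          (hsum u).symm
      _ < ∑ β : Fin k, condSet q P {r} (Function.update x0 r β) i v := by
          apply Finset.sum_lt_sum_of_nonempty
          · exact ⟨u, mem_univ u⟩
          · exact fun β _ => hcon β
      _ = 1 := hsum v
  exact absurd this (lt_irrefl 1)


section Claims

variable {k T : ℕ} (q : Fin k → ℝ) (P : Fin k → Fin k → ℝ)
  (hq0 : ∀ s, 0 < q s) (hP0 : ∀ s s', 0 < P s s')

include hq0 hP0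

lemma claimA (l r i : Fin (T + 1)) (hl : l.val < i.val) (hr : i.val < r.val)
    (u v : Fin k) (x0 : Fin (T + 1) → Fin k) :
    Real.log (condSet q P {l} x0 i u / condSet q P {l} x0 i v) ≤
      chainMaxInfl q P {l, r} i := by
  obtain ⟨β, hβ⟩ := exists_good_beta q P hq0 hP0 r i x0 u v
  set x1 := Function.update x0 r β with hx1
  have hlr : l ≠ r := Fin.ne_of_val_ne (by omega)
  have hil : i ∉ ({l} : Finset (Fin (T + 1))) := by
    simp only [Finset.mem_singleton]
    exact Fin.ne_of_val_ne (by omega)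
  have hir : i ∉ ({r} : Finset (Fin (T + 1))) := by
    simp only [Finset.mem_singleton]
    exact Fin.ne_of_val_ne (by omega)
  have hilr : i ∉ ({l, r} : Finset (Fin (T + 1))) := by
    simp only [Finset.mem_insert, Finset.mem_singleton]
    push_neg
    exact ⟨Fin.ne_of_val_ne (by omega), Fin.ne_of_val_ne (by omega)⟩
  have hcongr : ∀ w, condSet q P {l} x0 i w = condSet q P {l} x1 i w := by
    intro w
    apply condSet_congr
    intro j hj
    rw [Finset.mem_singleton] at hj
    subst hj
    exact (Function.update_of_ne hlr β x0).symm
  have hclu : 0 < condSet q P {l} x1 i u := condSet_pos q P hq0 hP0 _ x1 i u hil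
  have hclv : 0 < condSet q P {l} x1 i v := condSet_pos q P hq0 hP0 _ x1 i v hil
  have hcru : 0 < condSet q P {r} x1 i u := condSet_pos q P hq0 hP0 _ x1 i u hir
  have hcrv : 0 < condSet q P {r} x1 i v := condSet_pos q P hq0 hP0 _ x1 i v hir
  have hfu := condSet_factor q P l r i hl hr x1 u (margNode_pos q P hq0 hP0 i u)
  have hfv := condSet_factor q P l r i hl hr x1 v (margNode_pos q P hq0 hP0 i v)
  have hle : condSet q P {l} x1 i u / condSet q P {l} x1 i v ≤
      condSet q P {l, r} x1 i u / condSet q P {l, r} x1 i v := by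
    rw [hfu, hfv, ← div_mul_div_comm]
    exact le_mul_of_one_le_right (le_of_lt (div_pos hclu hclv))
      ((one_le_div hcrv).mpr hβ)
  calc Real.log (condSet q P {l} x0 i u / condSet q P {l} x0 i v)
      = Real.log (condSet q P {l} x1 i u / condSet q P {l} x1 i v) := by
        rw [hcongr u, hcongr v]
    _ ≤ Real.log (condSet q P {l, r} x1 i u / condSet q P {l, r} x1 i v) :=
        Real.log_le_log (div_pos hclu hclv) hle
    _ ≤ chainMaxInfl q P {l, r} i := by
        apply le_csSup (bddAbove_inflSet q P _ i)
        exact ⟨u, v, x1, margNode_pos q P hq0 hP0 i u, margNode_pos q P hq0 hP0 i v,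
          condSet_pos q P hq0 hP0 _ x1 i u hilr, condSet_pos q P hq0 hP0 _ x1 i v hilr, rfl⟩

lemma claimB (l r i : Fin (T + 1)) (hl : l.val < i.val) (hr : i.val < r.val)
    (u v : Fin k) (x0 : Fin (T + 1) → Fin k) :
    Real.log (condSet q P {r} x0 i u / condSet q P {r} x0 i v) ≤
      chainMaxInfl q P {l, r} i := by
  obtain ⟨α, hα⟩ := exists_good_beta q P hq0 hP0 l i x0 u v
  set x1 := Function.update x0 l α with hx1
  have hrl : r ≠ l := Fin.ne_of_val_ne (by omega)
  have hil : i ∉ ({l} : Finset (Fin (T + 1))) := by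
    simp only [Finset.mem_singleton]
    exact Fin.ne_of_val_ne (by omega)
  have hir : i ∉ ({r} : Finset (Fin (T + 1))) := by
    simp only [Finset.mem_singleton]
    exact Fin.ne_of_val_ne (by omega)
  have hilr : i ∉ ({l, r} : Finset (Fin (T + 1))) := by
    simp only [Finset.mem_insert, Finset.mem_singleton]
    push_neg
    exact ⟨Fin.ne_of_val_ne (by omega), Fin.ne_of_val_ne (by omega)⟩
  have hcongr : ∀ w, condSet q P {r} x0 i w = condSet q P {r} x1 i w := by
    intro w
    apply condSet_congr
    intro j hj
    rw [Finset.mem_singleton] at hj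
    subst hj
    exact (Function.update_of_ne hrl α x0).symm
  have hclu : 0 < condSet q P {l} x1 i u := condSet_pos q P hq0 hP0 _ x1 i u hil
  have hclv : 0 < condSet q P {l} x1 i v := condSet_pos q P hq0 hP0 _ x1 i v hil
  have hcru : 0 < condSet q P {r} x1 i u := condSet_pos q P hq0 hP0 _ x1 i u hir
  have hcrv : 0 < condSet q P {r} x1 i v := condSet_pos q P hq0 hP0 _ x1 i v hir
  have hfu := condSet_factor q P l r i hl hr x1 u (margNode_pos q P hq0 hP0 i u)
  have hfv := condSet_factor q P l r i hl hr x1 v (margNode_pos q P hq0 hP0 i v)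
  have hle : condSet q P {r} x1 i u / condSet q P {r} x1 i v ≤
      condSet q P {l, r} x1 i u / condSet q P {l, r} x1 i v := by
    rw [hfu, hfv, ← div_mul_div_comm]
    exact le_mul_of_one_le_left (le_of_lt (div_pos hcru hcrv))
      ((one_le_div hclv).mpr hα)
  calc Real.log (condSet q P {r} x0 i u / condSet q P {r} x0 i v)
      = Real.log (condSet q P {r} x1 i u / condSet q P {r} x1 i v) := by
        rw [hcongr u, hcongr v]
    _ ≤ Real.log (condSet q P {l, r} x1 i u / condSet q P {l, r} x1 i v) :=
        Real.log_le_log (div_pos hcru hcrv) hle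
    _ ≤ chainMaxInfl q P {l, r} i := by
        apply le_csSup (bddAbove_inflSet q P _ i)
        exact ⟨u, v, x1, margNode_pos q P hq0 hP0 i u, margNode_pos q P hq0 hP0 i v,
          condSet_pos q P hq0 hP0 _ x1 i u hilr, condSet_pos q P hq0 hP0 _ x1 i v hilr, rfl⟩

lemma helperMix (l1 r1 l2 r2 i : Fin (T + 1))
    (hl1 : l1.val < i.val) (hr1 : i.val < r1.val)
    (hl2 : l2.val < i.val) (hr2 : i.val < r2.val) (u0 : Fin k) :
    chainMaxInfl q P {l1, r2} i ≤
      chainMaxInfl q P {l1, r1} i + chainMaxInfl q P {l2, r2} i := by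
  have hil1 : i ∉ ({l1} : Finset (Fin (T + 1))) := by
    simp only [Finset.mem_singleton]; exact Fin.ne_of_val_ne (by omega)
  have hir2 : i ∉ ({r2} : Finset (Fin (T + 1))) := by
    simp only [Finset.mem_singleton]; exact Fin.ne_of_val_ne (by omega)
  have hiC : i ∉ ({l1, r2} : Finset (Fin (T + 1))) := by
    simp only [Finset.mem_insert, Finset.mem_singleton]
    push_neg
    exact ⟨Fin.ne_of_val_ne (by omega), Fin.ne_of_val_ne (by omega)⟩
  apply csSup_le ⟨0, zero_mem_inflSet q P hq0 hP0 _ i hiC u0 (fun _ => u0)⟩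
  rintro s ⟨u, v, x0, hmu, hmv, hcu, hcv, rfl⟩
  have hfu := condSet_factor q P l1 r2 i hl1 hr2 x0 u (margNode_pos q P hq0 hP0 i u)
  have hfv := condSet_factor q P l1 r2 i hl1 hr2 x0 v (margNode_pos q P hq0 hP0 i v)
  have hclu : 0 < condSet q P {l1} x0 i u := condSet_pos q P hq0 hP0 _ x0 i u hil1
  have hclv : 0 < condSet q P {l1} x0 i v := condSet_pos q P hq0 hP0 _ x0 i v hil1
  have hcru : 0 < condSet q P {r2} x0 i u := condSet_pos q P hq0 hP0 _ x0 i u hir2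
  have hcrv : 0 < condSet q P {r2} x0 i v := condSet_pos q P hq0 hP0 _ x0 i v hir2
  have hsplit : Real.log (condSet q P {l1, r2} x0 i u / condSet q P {l1, r2} x0 i v) =
      Real.log (condSet q P {l1} x0 i u / condSet q P {l1} x0 i v) +
        Real.log (condSet q P {r2} x0 i u / condSet q P {r2} x0 i v) := by
    rw [hfu, hfv, ← div_mul_div_comm,
      Real.log_mul (ne_of_gt (div_pos hclu hclv)) (ne_of_gt (div_pos hcru hcrv))]
  rw [hsplit]
  exact add_le_add (claimA q P hq0 hP0 l1 r1 i hl1 hr1 u v x0)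
    (claimB q P hq0 hP0 l2 r2 i hl2 hr2 u v x0)

end Claims

/-- **Subadditivity of max-influence over combined quilts (two-sided chain
version)**: for two two-sided Markov Quilts `{X_{i-a¹}, X_{i+b¹}}` and
`{X_{i-a²}, X_{i+b²}}` of a node `X_i` of a Markov chain, the sum of their
max-influences is at least the max-influence of the combined (closest) quilt
`{X_{i-min(a¹,a²)}, X_{i+min(b¹,b²)}}`. -/
theorem maxInfl_combined_quilt_subadditive {k T : ℕ}
    (q : Fin k → ℝ) (P : Fin k → Fin k → ℝ)
    (hq0 : ∀ s, 0 < q s) (hq1 : ∑ s, q s = 1)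
    (hP0 : ∀ s s', 0 < P s s') (hP1 : ∀ s, ∑ s', P s s' = 1)
    (i : Fin (T + 1)) (a1 a2 b1 b2 : ℕ)
    (ha11 : 1 ≤ a1) (ha12 : a1 ≤ i.val) (ha21 : 1 ≤ a2) (ha22 : a2 ≤ i.val)
    (hb11 : 1 ≤ b1) (hb12 : i.val + b1 ≤ T) (hb21 : 1 ≤ b2) (hb22 : i.val + b2 ≤ T) :
    chainMaxInfl q P {lnode i (min a1 a2), rnode i (min b1 b2)} i ≤
      chainMaxInfl q P {lnode i a1, rnode i b1} i +
        chainMaxInfl q P {lnode i a2, rnode i b2} i := by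
  have hk : 0 < k := by
    by_contra hk
    push_neg at hk
    interval_cases k
    simp at hq1
  have u0 : Fin k := ⟨0, hk⟩
  have hl1 : (lnode i a1).val < i.val := by show i.val - a1 < i.val; omega
  have hl2 : (lnode i a2).val < i.val := by show i.val - a2 < i.val; omega
  have hr1 : i.val < (rnode i b1).val := by show i.val < min (i.val + b1) T; omega
  have hr2 : i.val < (rnode i b2).val := by show i.val < min (i.val + b2) T; omega
  have hiQ1 : i ∉ ({lnode i a1, rnode i b1} : Finset (Fin (T + 1))) := by
    simp only [Finset.mem_insert, Finset.mem_singleton]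
    push_neg
    exact ⟨Fin.ne_of_val_ne (by omega), Fin.ne_of_val_ne (by omega)⟩
  have hiQ2 : i ∉ ({lnode i a2, rnode i b2} : Finset (Fin (T + 1))) := by
    simp only [Finset.mem_insert, Finset.mem_singleton]
    push_neg
    exact ⟨Fin.ne_of_val_ne (by omega), Fin.ne_of_val_ne (by omega)⟩
  rcases le_total a1 a2 with ha | ha <;> rcases le_total b1 b2 with hb | hb
  · rw [min_eq_left ha, min_eq_left hb]
    exact le_add_of_nonneg_right
      (chainMaxInfl_nonneg q P hq0 hP0 _ i hiQ2 u0 (fun _ => u0))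
  · rw [min_eq_left ha, min_eq_right hb]
    exact helperMix q P hq0 hP0 (lnode i a1) (rnode i b1) (lnode i a2) (rnode i b2) i
      hl1 hr1 hl2 hr2 u0
  · rw [min_eq_right ha, min_eq_left hb]
    have := helperMix q P hq0 hP0 (lnode i a2) (rnode i b2) (lnode i a1) (rnode i b1) i
      hl2 hr2 hl1 hr1 u0
    linarith
  · rw [min_eq_right ha, min_eq_right hb]
    exact le_add_of_nonneg_left
      (chainMaxInfl_nonneg q P hq0 hP0 _ i hiQ1 u0 (fun _ => u0))
end
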